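/- arXiv:2212.11472 — 2 statements merged into one kernel-verified Lean document; each statement's English description precedes it below -/
import Mathlib

section
/- Let g ≥ 1, n ≥ 2 be integers and ℓ ≥ 5 a prime. Let G be a closed subgroup of Δ_{2g,n}(Z_ℓ). Then G = Δ_{2g,n}(Z_ℓ) if and only if mult(G) = Z_ℓ^× and pr_{i,j}(G) = Δ_{2g}(Z_ℓ) for all 1 ≤ i ≠ j ≤ n, where pr_{i,j} is the projection onto the pair of the i-th and j-th coordinates. -/
open Matrix Polynomial

namespace Paper

variable (g : ℕ) (R : Type*) [CommRing R]

/-- The standard symplectic form matrix `J = [[0, I], [-I, 0]]`. -/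
def sJ : Matrix (Fin g ⊕ Fin g) (Fin g ⊕ Fin g) R := Matrix.fromBlocks 0 1 (-1) 0

variable {g R}

lemma symp_one :
    ((1 : GL (Fin g ⊕ Fin g) R) : Matrix (Fin g ⊕ Fin g) (Fin g ⊕ Fin g) R)ᵀ * sJ g R *
      ((1 : GL (Fin g ⊕ Fin g) R) : Matrix (Fin g ⊕ Fin g) (Fin g ⊕ Fin g) R)
      = ((1 : Rˣ) : R) • sJ g R := by
  simp

lemma symp_mul {a b : GL (Fin g ⊕ Fin g) R} {u v : Rˣ}
    (ha : (a : Matrix (Fin g ⊕ Fin g) (Fin g ⊕ Fin g) R)ᵀ * sJ g R * a = (u : R) • sJ g R)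
    (hb : (b : Matrix (Fin g ⊕ Fin g) (Fin g ⊕ Fin g) R)ᵀ * sJ g R * b = (v : R) • sJ g R) :
    ((a * b : GL (Fin g ⊕ Fin g) R) : Matrix (Fin g ⊕ Fin g) (Fin g ⊕ Fin g) R)ᵀ * sJ g R *
      ((a * b : GL (Fin g ⊕ Fin g) R) : Matrix (Fin g ⊕ Fin g) (Fin g ⊕ Fin g) R)
      = ((u * v : Rˣ) : R) • sJ g R := by
  have hab : ((a * b : GL (Fin g ⊕ Fin g) R) : Matrix (Fin g ⊕ Fin g) (Fin g ⊕ Fin g) R)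
      = (a : Matrix (Fin g ⊕ Fin g) (Fin g ⊕ Fin g) R) * b := rfl
  calc ((a * b : GL (Fin g ⊕ Fin g) R) : Matrix (Fin g ⊕ Fin g) (Fin g ⊕ Fin g) R)ᵀ * sJ g R *
        ((a * b : GL (Fin g ⊕ Fin g) R) : Matrix (Fin g ⊕ Fin g) (Fin g ⊕ Fin g) R)
      = (b : Matrix (Fin g ⊕ Fin g) (Fin g ⊕ Fin g) R)ᵀ *
          ((a : Matrix (Fin g ⊕ Fin g) (Fin g ⊕ Fin g) R)ᵀ * sJ g R * a) * b := by
        rw [hab, transpose_mul]; noncomm_ring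
    _ = (b : Matrix (Fin g ⊕ Fin g) (Fin g ⊕ Fin g) R)ᵀ * ((u : R) • sJ g R) * b := by rw [ha]
    _ = (u : R) • ((b : Matrix (Fin g ⊕ Fin g) (Fin g ⊕ Fin g) R)ᵀ * sJ g R * b) := by
        rw [Matrix.mul_smul, Matrix.smul_mul]
    _ = (u : R) • ((v : R) • sJ g R) := by rw [hb]
    _ = ((u * v : Rˣ) : R) • sJ g R := by rw [smul_smul, Units.val_mul]

lemma symp_inv {a : GL (Fin g ⊕ Fin g) R} {u : Rˣ}
    (ha : (a : Matrix (Fin g ⊕ Fin g) (Fin g ⊕ Fin g) R)ᵀ * sJ g R * a = (u : R) • sJ g R) :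
    ((a⁻¹ : GL (Fin g ⊕ Fin g) R) : Matrix (Fin g ⊕ Fin g) (Fin g ⊕ Fin g) R)ᵀ * sJ g R *
      ((a⁻¹ : GL (Fin g ⊕ Fin g) R) : Matrix (Fin g ⊕ Fin g) (Fin g ⊕ Fin g) R)
      = ((u⁻¹ : Rˣ) : R) • sJ g R := by
  have key : (u : R) • (((a⁻¹ : GL (Fin g ⊕ Fin g) R) : Matrix (Fin g ⊕ Fin g) (Fin g ⊕ Fin g) R)ᵀ *
      sJ g R * ((a⁻¹ : GL (Fin g ⊕ Fin g) R) : Matrix (Fin g ⊕ Fin g) (Fin g ⊕ Fin g) R)) = sJ g R := by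
    calc (u : R) • (((a⁻¹ : GL (Fin g ⊕ Fin g) R) : Matrix (Fin g ⊕ Fin g) (Fin g ⊕ Fin g) R)ᵀ *
          sJ g R * ((a⁻¹ : GL (Fin g ⊕ Fin g) R) : Matrix (Fin g ⊕ Fin g) (Fin g ⊕ Fin g) R))
        = ((a⁻¹ : GL (Fin g ⊕ Fin g) R) : Matrix (Fin g ⊕ Fin g) (Fin g ⊕ Fin g) R)ᵀ *
            ((u : R) • sJ g R) * ((a⁻¹ : GL (Fin g ⊕ Fin g) R) : Matrix (Fin g ⊕ Fin g) (Fin g ⊕ Fin g) R) := by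
          rw [Matrix.mul_smul, Matrix.smul_mul]
      _ = ((a⁻¹ : GL (Fin g ⊕ Fin g) R) : Matrix (Fin g ⊕ Fin g) (Fin g ⊕ Fin g) R)ᵀ *
            ((a : Matrix (Fin g ⊕ Fin g) (Fin g ⊕ Fin g) R)ᵀ * sJ g R * a) *
            ((a⁻¹ : GL (Fin g ⊕ Fin g) R) : Matrix (Fin g ⊕ Fin g) (Fin g ⊕ Fin g) R) := by rw [ha]
      _ = ((a : Matrix (Fin g ⊕ Fin g) (Fin g ⊕ Fin g) R) *
            ((a⁻¹ : GL (Fin g ⊕ Fin g) R) : Matrix (Fin g ⊕ Fin g) (Fin g ⊕ Fin g) R))ᵀ * sJ g R *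
            ((a : Matrix (Fin g ⊕ Fin g) (Fin g ⊕ Fin g) R) *
            ((a⁻¹ : GL (Fin g ⊕ Fin g) R) : Matrix (Fin g ⊕ Fin g) (Fin g ⊕ Fin g) R)) := by
          rw [transpose_mul]; noncomm_ring
      _ = sJ g R := by
          rw [← Units.val_mul, mul_inv_cancel]; simp
  calc ((a⁻¹ : GL (Fin g ⊕ Fin g) R) : Matrix (Fin g ⊕ Fin g) (Fin g ⊕ Fin g) R)ᵀ * sJ g R *
        ((a⁻¹ : GL (Fin g ⊕ Fin g) R) : Matrix (Fin g ⊕ Fin g) (Fin g ⊕ Fin g) R)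
      = ((u⁻¹ : Rˣ) : R) • ((u : R) •
          (((a⁻¹ : GL (Fin g ⊕ Fin g) R) : Matrix (Fin g ⊕ Fin g) (Fin g ⊕ Fin g) R)ᵀ * sJ g R *
          ((a⁻¹ : GL (Fin g ⊕ Fin g) R) : Matrix (Fin g ⊕ Fin g) (Fin g ⊕ Fin g) R))) := by
        rw [smul_smul, Units.inv_mul, one_smul]
    _ = ((u⁻¹ : Rˣ) : R) • sJ g R := by rw [key]

variable (g R)

/-- The general symplectic group `GSp_{2g}(R)` as a subgroup of `GL_{2g}(R)`. -/
def GSp : Subgroup (GL (Fin g ⊕ Fin g) R) where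
  carrier := {a | ∃ u : Rˣ,
    (a : Matrix (Fin g ⊕ Fin g) (Fin g ⊕ Fin g) R)ᵀ * sJ g R * a = (u : R) • sJ g R}
  one_mem' := ⟨1, symp_one⟩
  mul_mem' := fun ⟨u, hu⟩ ⟨v, hv⟩ => ⟨u * v, symp_mul hu hv⟩
  inv_mem' := fun ⟨u, hu⟩ => ⟨u⁻¹, symp_inv hu⟩

/-- The symplectic group `Sp_{2g}(R)`, the kernel of the multiplier. -/
def Sp : Subgroup (GL (Fin g ⊕ Fin g) R) where
  carrier := {a | (a : Matrix (Fin g ⊕ Fin g) (Fin g ⊕ Fin g) R)ᵀ * sJ g R * a = sJ g R}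
  one_mem' := by simpa using (symp_one (g := g) (R := R))
  mul_mem' := by
    intro a b ha hb
    have ha' : (a : Matrix (Fin g ⊕ Fin g) (Fin g ⊕ Fin g) R)ᵀ * sJ g R * a
        = ((1 : Rˣ) : R) • sJ g R := by simpa using ha
    have hb' : (b : Matrix (Fin g ⊕ Fin g) (Fin g ⊕ Fin g) R)ᵀ * sJ g R * b
        = ((1 : Rˣ) : R) • sJ g R := by simpa using hb
    simpa using symp_mul ha' hb'
  inv_mem' := by
    intro a ha
    have ha' : (a : Matrix (Fin g ⊕ Fin g) (Fin g ⊕ Fin g) R)ᵀ * sJ g R * a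
        = ((1 : Rˣ) : R) • sJ g R := by simpa using ha
    simpa using symp_inv ha'

/-- The fiber product `Δ_{2g}(R) = GSp ×_mult GSp`. -/
def Delta : Subgroup (GL (Fin g ⊕ Fin g) R × GL (Fin g ⊕ Fin g) R) where
  carrier := {p | ∃ u : Rˣ,
    (p.1 : Matrix (Fin g ⊕ Fin g) (Fin g ⊕ Fin g) R)ᵀ * sJ g R * p.1 = (u : R) • sJ g R ∧
    (p.2 : Matrix (Fin g ⊕ Fin g) (Fin g ⊕ Fin g) R)ᵀ * sJ g R * p.2 = (u : R) • sJ g R}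
  one_mem' := ⟨1, symp_one, symp_one⟩
  mul_mem' := fun ⟨u, hu1, hu2⟩ ⟨v, hv1, hv2⟩ => ⟨u * v, symp_mul hu1 hv1, symp_mul hu2 hv2⟩
  inv_mem' := fun ⟨u, hu1, hu2⟩ => ⟨u⁻¹, symp_inv hu1, symp_inv hu2⟩

/-- The `n`-fold fiber product `Δ_{2g,n}(R)`. -/
def DeltaN (n : ℕ) : Subgroup ((_ : Fin n) → GL (Fin g ⊕ Fin g) R) where
  carrier := {p | ∃ u : Rˣ, ∀ i,
    (p i : Matrix (Fin g ⊕ Fin g) (Fin g ⊕ Fin g) R)ᵀ * sJ g R * p i = (u : R) • sJ g R}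
  one_mem' := ⟨1, fun _ => symp_one⟩
  mul_mem' := fun ⟨u, hu⟩ ⟨v, hv⟩ => ⟨u * v, fun i => symp_mul (hu i) (hv i)⟩
  inv_mem' := fun ⟨u, hu⟩ => ⟨u⁻¹, fun i => symp_inv (hu i)⟩

variable {g R} in
/-- The multiplier of a symplectic similitude (defined to be `1` off `GSp`). -/
noncomputable def multiplier (a : GL (Fin g ⊕ Fin g) R) : Rˣ :=
  letI := Classical.propDecidable
  if h : ∃ u : Rˣ,
      (a : Matrix (Fin g ⊕ Fin g) (Fin g ⊕ Fin g) R)ᵀ * sJ g R * a = (u : R) • sJ g R then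
    h.choose
  else 1



lemma normal_comap_of_le_center {G : Type*} [Group G] (H K : Subgroup G)
    (hK : K ≤ Subgroup.center G) : (K.comap H.subtype).Normal := by
  constructor
  intro x hx y
  rw [Subgroup.mem_comap] at hx ⊢
  have hc : ∀ z : G, z * H.subtype x = H.subtype x * z :=
    fun z => Subgroup.mem_center_iff.mp (hK hx) z
  have hkey : H.subtype (y * x * y⁻¹) = H.subtype x := by
    simp only [_root_.map_mul, _root_.map_inv]
    rw [hc (H.subtype y), mul_assoc, mul_inv_cancel, mul_one]
  rw [hkey]
  exact hx

lemma neg_one_mem_center :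
    (-1 : GL (Fin g ⊕ Fin g) R) ∈ Subgroup.center (GL (Fin g ⊕ Fin g) R) := by
  rw [Subgroup.mem_center_iff]
  intro y
  simp

/-- The subgroup `{±I}` of `GSp_{2g}(R)`. -/
def pmI : Subgroup ↥(GSp g R) :=
  (Subgroup.zpowers (-1 : GL (Fin g ⊕ Fin g) R)).comap (GSp g R).subtype

instance pmI_normal : (pmI g R).Normal :=
  normal_comap_of_le_center _ _ (Subgroup.zpowers_le.mpr (neg_one_mem_center g R))

/-- The subgroup `{±I}` of `Sp_{2g}(R)`. -/
def pmISp : Subgroup ↥(Sp g R) :=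
  (Subgroup.zpowers (-1 : GL (Fin g ⊕ Fin g) R)).comap (Sp g R).subtype

instance pmISp_normal : (pmISp g R).Normal :=
  normal_comap_of_le_center _ _ (Subgroup.zpowers_le.mpr (neg_one_mem_center g R))

/-- `GSp_{2g}(R)/{±I}`. -/
abbrev GSpBar := ↥(GSp g R) ⧸ pmI g R

variable {g R}

/-- A multiplier-preserving automorphism of `GSp_{2g}(R)`. -/
def IsMultAut (σ : MulAut ↥(GSp g R)) : Prop :=
  ∀ γ : ↥(GSp g R), multiplier ((σ γ : GL (Fin g ⊕ Fin g) R)) = multiplier (γ : GL (Fin g ⊕ Fin g) R)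

/-- A multiplier-preserving automorphism of `GSp_{2g}(R)/{±I}`: expressed via representatives,
`mult ∘ σ = mult` where `mult` is the descended multiplier. -/
def IsMultAutBar (σ : MulAut (GSpBar g R)) : Prop :=
  ∀ γ δ : ↥(GSp g R), σ (QuotientGroup.mk γ) = QuotientGroup.mk δ →
    multiplier (δ : GL (Fin g ⊕ Fin g) R) = multiplier (γ : GL (Fin g ⊕ Fin g) R)

/-- An inner automorphism. -/
def IsInner {G : Type*} [Group G] (σ : MulAut G) : Prop :=
  ∃ x : G, MulAut.conj x = σ

/-- `σ` is the radial map `γ ↦ mult(γ)^k • γ`. -/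
def IsRadialWith (k : ℕ) (σ : MulAut ↥(GSp g R)) : Prop :=
  ∀ γ : ↥(GSp g R),
    ((σ γ : GL (Fin g ⊕ Fin g) R) : Matrix (Fin g ⊕ Fin g) (Fin g ⊕ Fin g) R)
      = ((multiplier (γ : GL (Fin g ⊕ Fin g) R) : Rˣ) : R) ^ k •
        ((γ : GL (Fin g ⊕ Fin g) R) : Matrix (Fin g ⊕ Fin g) (Fin g ⊕ Fin g) R)

/-- A radial automorphism `χ_k` of `GSp_{2g}(F_ℓ)`. -/
def IsRadial (ℓ : ℕ) (σ : MulAut ↥(GSp g R)) : Prop :=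
  ∃ k : ℕ, k < ℓ - 1 ∧ Nat.gcd (2 * k + 1) (ℓ - 1) = 1 ∧ IsRadialWith k σ



variable (g R)

/-- The subgroup of invertible scalar matrices `R_{2g}(R)` inside `GL_{2g}(R)`. -/
def ScalarGL : Subgroup (GL (Fin g ⊕ Fin g) R) where
  carrier := {a | ∃ lam : Rˣ,
    (a : Matrix (Fin g ⊕ Fin g) (Fin g ⊕ Fin g) R) = (lam : R) • 1}
  one_mem' := ⟨1, by simp⟩
  mul_mem' := by
    rintro a b ⟨s, hs⟩ ⟨t, ht⟩
    refine ⟨s * t, ?_⟩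
    have hab : ((a * b : GL (Fin g ⊕ Fin g) R) : Matrix (Fin g ⊕ Fin g) (Fin g ⊕ Fin g) R)
        = (a : Matrix (Fin g ⊕ Fin g) (Fin g ⊕ Fin g) R) * b := rfl
    rw [hab, hs, ht, Matrix.smul_mul, Matrix.mul_smul, smul_smul, one_mul, Units.val_mul]
  inv_mem' := by
    rintro a ⟨s, hs⟩
    refine ⟨s⁻¹, ?_⟩
    have h1 : ((s⁻¹ : Rˣ) : R) • (1 : Matrix (Fin g ⊕ Fin g) (Fin g ⊕ Fin g) R) *
        (a : Matrix (Fin g ⊕ Fin g) (Fin g ⊕ Fin g) R) = 1 := by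
      rw [hs, Matrix.smul_mul, Matrix.mul_smul, smul_smul, one_mul, Units.inv_mul, one_smul]
    exact Units.inv_eq_of_mul_eq_one_left h1

lemma scalar_le_center : ScalarGL g R ≤ Subgroup.center (GL (Fin g ⊕ Fin g) R) := by
  rintro a ⟨s, hs⟩
  rw [Subgroup.mem_center_iff]
  intro y
  refine Units.ext ?_
  show (y : Matrix (Fin g ⊕ Fin g) (Fin g ⊕ Fin g) R) * a
      = (a : Matrix (Fin g ⊕ Fin g) (Fin g ⊕ Fin g) R) * y
  rw [hs, Matrix.mul_smul, Matrix.smul_mul, mul_one, one_mul]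

/-- The subgroup of scalars inside `GSp_{2g}(R)`. -/
def Rsub : Subgroup ↥(GSp g R) := (ScalarGL g R).comap (GSp g R).subtype

instance Rsub_normal : (Rsub g R).Normal :=
  normal_comap_of_le_center _ _ (scalar_le_center g R)

/-- The block diagonal matrix `diag(a·I_g, I_g)`. -/
def iotaM (a : R) : Matrix (Fin g ⊕ Fin g) (Fin g ⊕ Fin g) R :=
  Matrix.fromBlocks (a • 1) 0 0 1

/-- `ι : R^× → GL_{2g}(R)`, `a ↦ diag(a·I_g, I_g)`. -/
def iota (a : Rˣ) : GL (Fin g ⊕ Fin g) R where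
  val := iotaM g R (a : R)
  inv := iotaM g R ((a⁻¹ : Rˣ) : R)
  val_inv := by
    simp [iotaM, Matrix.fromBlocks_multiply, Matrix.smul_mul, Matrix.mul_smul, smul_smul,
      ← Units.val_mul]
  inv_val := by
    simp [iotaM, Matrix.fromBlocks_multiply, Matrix.smul_mul, Matrix.mul_smul, smul_smul,
      ← Units.val_mul]



lemma iota_mem (a : Rˣ) : iota g R a ∈ GSp g R := by
  refine ⟨a, ?_⟩
  show (iotaM g R (a : R))ᵀ * sJ g R * iotaM g R (a : R) = (a : R) • sJ g R
  simp [iotaM, sJ, Matrix.fromBlocks_transpose, Matrix.fromBlocks_multiply,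
    Matrix.fromBlocks_smul, Matrix.smul_mul, Matrix.mul_smul]

lemma iota_mul (a b : Rˣ) : iota g R (a * b) = iota g R a * iota g R b := by
  refine Units.ext ?_
  show iotaM g R ((a * b : Rˣ) : R) = iotaM g R (a : R) * iotaM g R (b : R)
  simp [iotaM, Matrix.fromBlocks_multiply, Matrix.smul_mul, Matrix.mul_smul, smul_smul,
    mul_comm]

/-- `ι` as a group homomorphism `R^× → GSp_{2g}(R)`. -/
def iotaHom : Rˣ →* ↥(GSp g R) where
  toFun a := ⟨iota g R a, iota_mem g R a⟩
  map_one' := by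
    refine Subtype.ext (Units.ext ?_)
    show iotaM g R ((1 : Rˣ) : R) = (1 : Matrix (Fin g ⊕ Fin g) (Fin g ⊕ Fin g) R)
    simp [iotaM, Matrix.fromBlocks_one]
  map_mul' a b := Subtype.ext (iota_mul g R a b)


section Omg

variable {g : ℕ} {R : Type*} [CommRing R]

/-- The symplectic pairing. -/
def omg (x y : (Fin g ⊕ Fin g) → R) : R := x ⬝ᵥ (sJ g R *ᵥ y)

/-- basis vectors -/
def eps (i : Fin g) : (Fin g ⊕ Fin g) → R := Pi.single (Sum.inl i) 1
def phv (i : Fin g) : (Fin g ⊕ Fin g) → R := Pi.single (Sum.inr i) 1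

lemma sJ_mulVec (y : (Fin g ⊕ Fin g) → R) :
    sJ g R *ᵥ y = Sum.elim (fun i => y (Sum.inr i)) (fun i => - y (Sum.inl i)) := by
  have : y = Sum.elim (y ∘ Sum.inl) (y ∘ Sum.inr) := by
    funext p; cases p <;> rfl
  rw [sJ, this, Matrix.fromBlocks_mulVec]
  funext p; cases p <;> simp [Matrix.neg_mulVec]

lemma omg_expand (x y : (Fin g ⊕ Fin g) → R) :
    omg x y = ∑ i : Fin g, x (Sum.inl i) * y (Sum.inr i)
      - ∑ i : Fin g, x (Sum.inr i) * y (Sum.inl i) := by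
  rw [omg, sJ_mulVec, dotProduct, Fintype.sum_sum_type]
  simp [mul_neg, sub_eq_add_neg, Finset.sum_neg_distrib]

lemma omg_self (x : (Fin g ⊕ Fin g) → R) : omg x x = 0 := by
  rw [omg_expand, sub_eq_zero]
  exact Finset.sum_congr rfl fun i _ => mul_comm _ _

lemma omg_add_left (x x' y : (Fin g ⊕ Fin g) → R) :
    omg (x + x') y = omg x y + omg x' y := by
  simp [omg, add_dotProduct]

lemma omg_add_right (x y y' : (Fin g ⊕ Fin g) → R) :
    omg x (y + y') = omg x y + omg x y' := by
  simp [omg, Matrix.mulVec_add, dotProduct_add]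

lemma omg_sub_left (x x' y : (Fin g ⊕ Fin g) → R) :
    omg (x - x') y = omg x y - omg x' y := by
  simp [omg, sub_dotProduct]

lemma omg_sub_right (x y y' : (Fin g ⊕ Fin g) → R) :
    omg x (y - y') = omg x y - omg x y' := by
  simp [omg, Matrix.mulVec_sub, dotProduct_sub]

lemma omg_smul_right (x y : (Fin g ⊕ Fin g) → R) (c : R) :
    omg x (c • y) = c * omg x y := by
  simp [omg, Matrix.mulVec_smul, dotProduct_smul, smul_eq_mul]

lemma omg_anti (x y : (Fin g ⊕ Fin g) → R) : omg x y = - omg y x := by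
  rw [omg_expand, omg_expand, neg_sub]
  congr 1 <;> exact Finset.sum_congr rfl fun i _ => mul_comm _ _

lemma omg_phv (x : (Fin g ⊕ Fin g) → R) (j : Fin g) : omg x (phv j) = x (Sum.inl j) := by
  rw [omg_expand]
  simp [phv, Pi.single_apply]

lemma omg_eps (x : (Fin g ⊕ Fin g) → R) (j : Fin g) : omg x (eps j) = - x (Sum.inr j) := by
  rw [omg_expand]
  simp [eps, Pi.single_apply]

lemma omg_eps_left (y : (Fin g ⊕ Fin g) → R) (j : Fin g) : omg (eps j) y = y (Sum.inr j) := by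
  rw [omg_expand]
  simp [eps, Pi.single_apply]

lemma omg_phv_left (y : (Fin g ⊕ Fin g) → R) (j : Fin g) : omg (phv j) y = - y (Sum.inl j) := by
  rw [omg_expand]
  simp [phv, Pi.single_apply]

end Omg
section Transvection

variable {g : ℕ} {R : Type*} [CommRing R]

lemma vecMulVec_mul_mat (a : (Fin g ⊕ Fin g) → R) (b : (Fin g ⊕ Fin g) → R)
    (M : Matrix (Fin g ⊕ Fin g) (Fin g ⊕ Fin g) R) :
    vecMulVec a b * M = vecMulVec a (b ᵥ* M) := by
  ext i j
  simp only [Matrix.mul_apply, vecMulVec_apply, Matrix.vecMul, dotProduct,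
    Fintype.sum_sum_type, mul_assoc]
  simp [mul_add, Finset.mul_sum]

lemma mat_mul_vecMulVec (a : (Fin g ⊕ Fin g) → R) (b : (Fin g ⊕ Fin g) → R)
    (M : Matrix (Fin g ⊕ Fin g) (Fin g ⊕ Fin g) R) :
    M * vecMulVec a b = vecMulVec (M *ᵥ a) b := by
  ext i j
  simp [Matrix.mul_apply, vecMulVec_apply, Matrix.mulVec, dotProduct,
    Fintype.sum_sum_type, Finset.sum_mul, add_mul, mul_assoc]

lemma vecMulVec_mul_vecMulVec (a b c d : (Fin g ⊕ Fin g) → R) :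
    vecMulVec a b * vecMulVec c d = (b ⬝ᵥ c) • vecMulVec a d := by
  ext i j
  simp only [Matrix.mul_apply, vecMulVec_apply, Matrix.smul_apply, smul_eq_mul, dotProduct,
    Finset.mul_sum, Finset.sum_mul]
  exact Finset.sum_congr rfl fun k _ => by ring

lemma sJ_transpose : (sJ g R)ᵀ = - sJ g R := by
  rw [sJ, Matrix.fromBlocks_transpose]
  simp [Matrix.fromBlocks_neg]

lemma vecMul_sJ (b : (Fin g ⊕ Fin g) → R) : b ᵥ* sJ g R = - (sJ g R *ᵥ b) := by
  have : b ᵥ* ((sJ g R)ᵀ)ᵀ = (sJ g R)ᵀ *ᵥ b := Matrix.vecMul_transpose _ b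
  rw [Matrix.transpose_transpose] at this
  rw [this, sJ_transpose, Matrix.neg_mulVec]

/-- rank one matrix of a transvection -/
def Emat (v : (Fin g ⊕ Fin g) → R) : Matrix (Fin g ⊕ Fin g) (Fin g ⊕ Fin g) R :=
  vecMulVec v (sJ g R *ᵥ v)

/-- transvection matrix -/
def Tmat (v : (Fin g ⊕ Fin g) → R) (c : R) : Matrix (Fin g ⊕ Fin g) (Fin g ⊕ Fin g) R :=
  1 + c • Emat v

lemma Emat_mulVec (v x : (Fin g ⊕ Fin g) → R) : Emat v *ᵥ x = omg x v • v := by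
  funext i
  simp only [Emat, Matrix.mulVec, dotProduct, vecMulVec_apply, Pi.smul_apply, smul_eq_mul, omg]
  rw [Finset.sum_mul]
  exact Finset.sum_congr rfl fun k _ => by ring

lemma Emat_mul_Emat (v : (Fin g ⊕ Fin g) → R) : Emat v * Emat v = 0 := by
  rw [Emat, vecMulVec_mul_vecMulVec]
  have : (sJ g R *ᵥ v) ⬝ᵥ v = omg v v := by
    rw [omg, dotProduct_comm]
  rw [this, omg_self, zero_smul]

lemma Tmat_mulVec (v x : (Fin g ⊕ Fin g) → R) (c : R) :
    Tmat v c *ᵥ x = x + (c * omg x v) • v := by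
  rw [Tmat, Matrix.add_mulVec, Matrix.one_mulVec, Matrix.smul_mulVec, Emat_mulVec,
    smul_smul]

lemma Tmat_mul_Tmat (v : (Fin g ⊕ Fin g) → R) (c d : R) :
    Tmat v c * Tmat v d = Tmat v (c + d) := by
  simp only [Tmat, add_mul, mul_add, one_mul, mul_one, Matrix.smul_mul, Matrix.mul_smul,
    Emat_mul_Emat, smul_zero, add_smul]
  abel

lemma Tmat_zero (v : (Fin g ⊕ Fin g) → R) : Tmat v 0 = 1 := by
  simp [Tmat]

lemma Emat_transpose (v : (Fin g ⊕ Fin g) → R) :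
    (Emat v)ᵀ = vecMulVec (sJ g R *ᵥ v) v := by
  ext i j; simp [Emat, vecMulVec_apply, mul_comm]

lemma Tmat_symp (v : (Fin g ⊕ Fin g) → R) (c : R) :
    (Tmat v c)ᵀ * sJ g R * Tmat v c = sJ g R := by
  have hJE : sJ g R * Emat v = vecMulVec (sJ g R *ᵥ v) (sJ g R *ᵥ v) := by
    rw [Emat, mat_mul_vecMulVec]
  have hEJ : (Emat v)ᵀ * sJ g R = - vecMulVec (sJ g R *ᵥ v) (sJ g R *ᵥ v) := by
    rw [Emat_transpose, vecMulVec_mul_mat, vecMul_sJ]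
    ext i j; simp [vecMulVec_apply]
  have hWE : vecMulVec (sJ g R *ᵥ v) (sJ g R *ᵥ v) * Emat v = 0 := by
    rw [Emat, vecMulVec_mul_vecMulVec]
    have : (sJ g R *ᵥ v) ⬝ᵥ v = omg v v := by rw [omg, dotProduct_comm]
    rw [this, omg_self, zero_smul]
  simp only [Tmat, Matrix.transpose_add, Matrix.transpose_one, Matrix.transpose_smul,
    Matrix.add_mul, Matrix.mul_add, Matrix.smul_mul, Matrix.mul_smul, one_mul, mul_one]
  rw [hJE, hEJ, Matrix.neg_mul, hWE]
  simp

/-- transvection as an element of `GL`. -/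
def Tunit (v : (Fin g ⊕ Fin g) → R) (c : R) : GL (Fin g ⊕ Fin g) R where
  val := Tmat v c
  inv := Tmat v (-c)
  val_inv := by rw [Tmat_mul_Tmat, add_neg_cancel, Tmat_zero]
  inv_val := by rw [Tmat_mul_Tmat, neg_add_cancel, Tmat_zero]

@[simp] lemma Tunit_val (v : (Fin g ⊕ Fin g) → R) (c : R) :
    ((Tunit v c : GL (Fin g ⊕ Fin g) R) : Matrix (Fin g ⊕ Fin g) (Fin g ⊕ Fin g) R) = Tmat v c :=
  rfl

lemma Tunit_mem_Sp (v : (Fin g ⊕ Fin g) → R) (c : R) : Tunit v c ∈ Sp g R := Tmat_symp v c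

lemma Tunit_inv (v : (Fin g ⊕ Fin g) → R) (c : R) : (Tunit v c)⁻¹ = Tunit v (-c) :=
  Units.ext rfl

lemma Tunit_mul (v : (Fin g ⊕ Fin g) → R) (c d : R) :
    Tunit v c * Tunit v d = Tunit v (c + d) := by
  ext : 1
  exact Tmat_mul_Tmat v c d

lemma Emat_smul_vec (c : R) (v : (Fin g ⊕ Fin g) → R) : Emat (c • v) = (c * c) • Emat v := by
  ext i j
  simp [Emat, vecMulVec_apply, Matrix.mulVec_smul]
  ring

lemma Tunit_smul_vec (c : R) (v : (Fin g ⊕ Fin g) → R) (d : R) :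
    Tunit (c • v) d = Tunit v (c * c * d) := by
  ext : 1
  show Tmat (c • v) d = Tmat v (c * c * d)
  rw [Tmat, Tmat, Emat_smul_vec, smul_smul]
  ring_nf

lemma vecMul_eq_transpose_mulVec {m : Type*} [Fintype m] (x : m → R)
    (B : Matrix m m R) : x ᵥ* B = Bᵀ *ᵥ x := by
  conv_lhs => rw [← Matrix.transpose_transpose B]
  rw [Matrix.vecMul_transpose]

lemma sp_inv_transpose_mul_sJ {a : GL (Fin g ⊕ Fin g) R} (ha : a ∈ Sp g R) :
    ((a⁻¹ : GL (Fin g ⊕ Fin g) R) : Matrix (Fin g ⊕ Fin g) (Fin g ⊕ Fin g) R)ᵀ * sJ g R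
      = sJ g R * (a : Matrix (Fin g ⊕ Fin g) (Fin g ⊕ Fin g) R) := by
  have ha' : (a : Matrix (Fin g ⊕ Fin g) (Fin g ⊕ Fin g) R)ᵀ * sJ g R * a = sJ g R := ha
  have hmul : ((a⁻¹ : GL (Fin g ⊕ Fin g) R) : Matrix (Fin g ⊕ Fin g) (Fin g ⊕ Fin g) R) *
      (a : Matrix (Fin g ⊕ Fin g) (Fin g ⊕ Fin g) R) = 1 := by
    rw [← Units.val_mul, inv_mul_cancel, Units.val_one]
  calc ((a⁻¹ : GL (Fin g ⊕ Fin g) R) : Matrix (Fin g ⊕ Fin g) (Fin g ⊕ Fin g) R)ᵀ * sJ g R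
      = ((a⁻¹ : GL (Fin g ⊕ Fin g) R) : Matrix (Fin g ⊕ Fin g) (Fin g ⊕ Fin g) R)ᵀ *
        ((a : Matrix (Fin g ⊕ Fin g) (Fin g ⊕ Fin g) R)ᵀ * sJ g R * a) := by rw [ha']
    _ = ((a : Matrix (Fin g ⊕ Fin g) (Fin g ⊕ Fin g) R) *
          ((a⁻¹ : GL (Fin g ⊕ Fin g) R) : Matrix (Fin g ⊕ Fin g) (Fin g ⊕ Fin g) R))ᵀ *
          (sJ g R * a) := by
        rw [Matrix.transpose_mul]; noncomm_ring
    _ = sJ g R * (a : Matrix (Fin g ⊕ Fin g) (Fin g ⊕ Fin g) R) := by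
        rw [← Units.val_mul, mul_inv_cancel, Units.val_one, Matrix.transpose_one, one_mul]

lemma sp_conj_Tunit {a : GL (Fin g ⊕ Fin g) R} (ha : a ∈ Sp g R)
    (v : (Fin g ⊕ Fin g) → R) (c : R) :
    a * Tunit v c * a⁻¹ = Tunit ((a : Matrix (Fin g ⊕ Fin g) (Fin g ⊕ Fin g) R) *ᵥ v) c := by
  have hmul : (a : Matrix (Fin g ⊕ Fin g) (Fin g ⊕ Fin g) R) *
      ((a⁻¹ : GL (Fin g ⊕ Fin g) R) : Matrix (Fin g ⊕ Fin g) (Fin g ⊕ Fin g) R) = 1 := by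
    rw [← Units.val_mul, mul_inv_cancel, Units.val_one]
  ext : 1
  show (a : Matrix (Fin g ⊕ Fin g) (Fin g ⊕ Fin g) R) * Tmat v c *
      ((a⁻¹ : GL (Fin g ⊕ Fin g) R) : Matrix (Fin g ⊕ Fin g) (Fin g ⊕ Fin g) R)
      = Tmat ((a : Matrix (Fin g ⊕ Fin g) (Fin g ⊕ Fin g) R) *ᵥ v) c
  have hE : (a : Matrix (Fin g ⊕ Fin g) (Fin g ⊕ Fin g) R) * Emat v *
      ((a⁻¹ : GL (Fin g ⊕ Fin g) R) : Matrix (Fin g ⊕ Fin g) (Fin g ⊕ Fin g) R)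
      = Emat ((a : Matrix (Fin g ⊕ Fin g) (Fin g ⊕ Fin g) R) *ᵥ v) := by
    rw [Emat, mat_mul_vecMulVec, vecMulVec_mul_mat, Emat]
    congr 1
    -- (sJ *ᵥ v) ᵥ* ↑a⁻¹ = sJ *ᵥ (↑a *ᵥ v)
    rw [vecMul_eq_transpose_mulVec, Matrix.mulVec_mulVec, sp_inv_transpose_mul_sJ ha, ← Matrix.mulVec_mulVec]
  rw [Tmat, Matrix.mul_add, Matrix.add_mul, mul_one, hmul, Matrix.mul_smul, Matrix.smul_mul, hE,
    Tmat]

end Transvection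
section Elim

variable (g : ℕ) (R : Type*) [CommRing R]

/-- Transvections with unimodular direction vector. -/
def TGen : Set (GL (Fin g ⊕ Fin g) R) :=
  {t | ∃ v c, (∃ p, IsUnit (v p)) ∧ t = Tunit v c}

/-- Subgroup generated by unimodular transvections. -/
def TCl : Subgroup (GL (Fin g ⊕ Fin g) R) := Subgroup.closure (TGen g R)

variable {g R}

lemma TCl_le_Sp : TCl g R ≤ Sp g R := by
  rw [TCl, Subgroup.closure_le]
  rintro t ⟨v, c, -, rfl⟩
  exact Tunit_mem_Sp v c

lemma eps_apply_inl (j i : Fin g) : (eps j : (Fin g ⊕ Fin g) → R) (Sum.inl i)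
    = if i = j then 1 else 0 := by simp [eps, Pi.single_apply]

@[simp] lemma eps_apply_inr (j i : Fin g) : (eps j : (Fin g ⊕ Fin g) → R) (Sum.inr i) = 0 := by
  simp [eps, Pi.single_apply]

lemma phv_apply_inr (j i : Fin g) : (phv j : (Fin g ⊕ Fin g) → R) (Sum.inr i)
    = if i = j then 1 else 0 := by simp [phv, Pi.single_apply]

@[simp] lemma phv_apply_inl (j i : Fin g) : (phv j : (Fin g ⊕ Fin g) → R) (Sum.inl i) = 0 := by
  simp [phv, Pi.single_apply]

variable [IsLocalRing R]

lemma isUnit_add_of_nonunit {a b : R} (ha : IsUnit a) (hb : ¬IsUnit b) : IsUnit (a + b) := by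
  by_contra h
  have h2 := IsLocalRing.nonunits_add (mem_nonunits_iff.mpr h)
      (mem_nonunits_iff.mpr (fun hu : IsUnit (-b) => hb (by simpa using hu.neg)))
  rw [add_assoc, add_neg_cancel, add_zero] at h2
  exact (mem_nonunits_iff.mp h2) ha

lemma exists_isUnit_left_of_omg {v w : (Fin g ⊕ Fin g) → R} (h : IsUnit (omg v w)) :
    ∃ p, IsUnit (v p) := by
  by_contra hno
  push_neg at hno
  have hmem : omg v w ∈ IsLocalRing.maximalIdeal R := by
    rw [omg_expand]
    refine sub_mem (Ideal.sum_mem _ fun i _ => Ideal.mul_mem_right _ _ ?_)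
      (Ideal.sum_mem _ fun i _ => Ideal.mul_mem_right _ _ ?_)
    · exact (IsLocalRing.mem_maximalIdeal _).mpr (hno _)
    · exact (IsLocalRing.mem_maximalIdeal _).mpr (hno _)
  exact (mem_nonunits_iff.mp ((IsLocalRing.mem_maximalIdeal _).mp hmem)) h

lemma exists_isUnit_right_of_omg {v w : (Fin g ⊕ Fin g) → R} (h : IsUnit (omg v w)) :
    ∃ p, IsUnit (w p) := by
  have h' : IsUnit (omg w v) := by
    rw [omg_anti]; exact h.neg
  exact exists_isUnit_left_of_omg h'

lemma move_one {v τ : (Fin g ⊕ Fin g) → R} (h : IsUnit (omg v τ)) :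
    ∃ t : GL (Fin g ⊕ Fin g) R, t ∈ TCl g R ∧
      (t : Matrix (Fin g ⊕ Fin g) (Fin g ⊕ Fin g) R) *ᵥ v = τ ∧
      ∀ x, omg x (τ - v) = 0 →
        (t : Matrix (Fin g ⊕ Fin g) (Fin g ⊕ Fin g) R) *ᵥ x = x := by
  have hvτ : omg v (τ - v) = omg v τ := by rw [omg_sub_right, omg_self, sub_zero]
  obtain ⟨u, hu⟩ := id h
  refine ⟨Tunit (τ - v) ((u⁻¹ : Rˣ) : R), ?_, ?_, ?_⟩
  · apply Subgroup.subset_closure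
    refine ⟨τ - v, _, ?_, rfl⟩
    exact exists_isUnit_right_of_omg (v := v) (by rw [hvτ]; exact h)
  · rw [Tunit_val, Tmat_mulVec, hvτ]
    have hone : ((u⁻¹ : Rˣ) : R) * omg v τ = 1 := by
      rw [← hu]; exact Units.inv_mul _
    rw [hone, one_smul]
    abel
  · intro x hx
    rw [Tunit_val, Tmat_mulVec, hx, mul_zero, zero_smul, add_zero]

lemma move_two {v m τ : (Fin g ⊕ Fin g) → R} (h1 : IsUnit (omg v m)) (h2 : IsUnit (omg m τ)) :
    ∃ t : GL (Fin g ⊕ Fin g) R, t ∈ TCl g R ∧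
      (t : Matrix (Fin g ⊕ Fin g) (Fin g ⊕ Fin g) R) *ᵥ v = τ ∧
      ∀ x, omg x (m - v) = 0 → omg x (τ - m) = 0 →
        (t : Matrix (Fin g ⊕ Fin g) (Fin g ⊕ Fin g) R) *ᵥ x = x := by
  obtain ⟨t1, ht1, ha1, hf1⟩ := move_one h1
  obtain ⟨t2, ht2, ha2, hf2⟩ := move_one h2
  refine ⟨t2 * t1, mul_mem ht2 ht1, ?_, ?_⟩
  · rw [Units.val_mul, ← Matrix.mulVec_mulVec, ha1, ha2]
  · intro x hx1 hx2
    rw [Units.val_mul, ← Matrix.mulVec_mulVec, hf1 x hx1, hf2 x hx2]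

/-- vanishing of the first `k` coordinate pairs -/
def inW (k : ℕ) (x : (Fin g ⊕ Fin g) → R) : Prop :=
  ∀ i : Fin g, (i : ℕ) < k → x (Sum.inl i) = 0 ∧ x (Sum.inr i) = 0


lemma M1 {k : ℕ} (kk : Fin g) (hkk : (kk : ℕ) = k) {v : (Fin g ⊕ Fin g) → R}
    (hW : inW k v) (hu : ∃ p, IsUnit (v p)) :
    ∃ t : GL (Fin g ⊕ Fin g) R, t ∈ TCl g R ∧
      (t : Matrix (Fin g ⊕ Fin g) (Fin g ⊕ Fin g) R) *ᵥ v = eps kk ∧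
      ∀ i : Fin g, (i : ℕ) < k →
        (t : Matrix (Fin g ⊕ Fin g) (Fin g ⊕ Fin g) R) *ᵥ (eps i) = eps i ∧
        (t : Matrix (Fin g ⊕ Fin g) (Fin g ⊕ Fin g) R) *ᵥ (phv i) = phv i := by
  by_cases hc1 : IsUnit (omg v (eps kk : (Fin g ⊕ Fin g) → R))
  · obtain ⟨t, htcl, hact, hfix⟩ := move_one hc1
    refine ⟨t, htcl, hact, fun i hi => ?_⟩
    have hik : i ≠ kk := by rintro rfl; omega
    constructor <;>
      [exact hfix _ (by simp [omg_eps_left, omg_phv_left, Pi.sub_apply, eps_apply_inl,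
        eps_apply_inr, phv_apply_inl, phv_apply_inr, (hW i hi).1, (hW i hi).2, hik]);
       exact hfix _ (by simp [omg_eps_left, omg_phv_left, Pi.sub_apply, eps_apply_inl,
        eps_apply_inr, phv_apply_inl, phv_apply_inr, (hW i hi).1, (hW i hi).2, hik])]
  · by_cases hc2 : IsUnit (omg v (phv kk : (Fin g ⊕ Fin g) → R))
    · have h2 : IsUnit (omg (phv kk : (Fin g ⊕ Fin g) → R) (eps kk)) := by
        rw [omg_eps, phv_apply_inr, if_pos rfl]
        exact isUnit_one.neg
      obtain ⟨t, htcl, hact, hfix⟩ := move_two hc2 h2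
      refine ⟨t, htcl, hact, fun i hi => ?_⟩
      have hik : i ≠ kk := by rintro rfl; omega
      constructor <;>
        [exact hfix _ (by simp [omg_eps_left, omg_phv_left, Pi.sub_apply, eps_apply_inl,
            eps_apply_inr, phv_apply_inl, phv_apply_inr, (hW i hi).1, (hW i hi).2, hik])
          (by simp [omg_eps_left, omg_phv_left, Pi.sub_apply, eps_apply_inl,
            eps_apply_inr, phv_apply_inl, phv_apply_inr, (hW i hi).1, (hW i hi).2, hik]);
         exact hfix _ (by simp [omg_eps_left, omg_phv_left, Pi.sub_apply, eps_apply_inl,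
            eps_apply_inr, phv_apply_inl, phv_apply_inr, (hW i hi).1, (hW i hi).2, hik])
          (by simp [omg_eps_left, omg_phv_left, Pi.sub_apply, eps_apply_inl,
            eps_apply_inr, phv_apply_inl, phv_apply_inr, (hW i hi).1, (hW i hi).2, hik])]
    · obtain ⟨p, hp⟩ := hu
      -- the unit coordinate sits at an index different from kk and not < k
      cases p with
      | inl i0 =>
        have hi0k : ¬ ((i0 : ℕ) < k) := fun h =>
          not_isUnit_zero (by rwa [(hW i0 h).1] at hp)
        have hkk0 : kk ≠ i0 := by
          rintro rfl; exact hc2 (by rwa [omg_phv])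
        have hvb : IsUnit (omg v (phv i0 : (Fin g ⊕ Fin g) → R)) := by rwa [omg_phv]
        have h1 : IsUnit (omg v ((phv i0 + phv kk) : (Fin g ⊕ Fin g) → R)) := by
          rw [omg_add_right]
          exact isUnit_add_of_nonunit hvb hc2
        have h2 : IsUnit (omg ((phv i0 + phv kk) : (Fin g ⊕ Fin g) → R) (eps kk)) := by
          rw [omg_eps, Pi.add_apply, phv_apply_inr, phv_apply_inr, if_neg hkk0, if_pos rfl,
            zero_add]
          exact isUnit_one.neg
        obtain ⟨t, htcl, hact, hfix⟩ := move_two h1 h2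
        refine ⟨t, htcl, hact, fun i hi => ?_⟩
        have hik : i ≠ kk := by rintro rfl; omega
        have hii0 : i ≠ i0 := by rintro rfl; omega
        constructor <;>
          [exact hfix _ (by simp [omg_eps_left, omg_phv_left, Pi.sub_apply, Pi.add_apply,
              eps_apply_inl, eps_apply_inr, phv_apply_inl, phv_apply_inr,
              (hW i hi).1, (hW i hi).2, hik, hii0])
            (by simp [omg_eps_left, omg_phv_left, Pi.sub_apply, Pi.add_apply,
              eps_apply_inl, eps_apply_inr, phv_apply_inl, phv_apply_inr,
              (hW i hi).1, (hW i hi).2, hik, hii0]);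
           exact hfix _ (by simp [omg_eps_left, omg_phv_left, Pi.sub_apply, Pi.add_apply,
              eps_apply_inl, eps_apply_inr, phv_apply_inl, phv_apply_inr,
              (hW i hi).1, (hW i hi).2, hik, hii0])
            (by simp [omg_eps_left, omg_phv_left, Pi.sub_apply, Pi.add_apply,
              eps_apply_inl, eps_apply_inr, phv_apply_inl, phv_apply_inr,
              (hW i hi).1, (hW i hi).2, hik, hii0])]
      | inr i0 =>
        have hi0k : ¬ ((i0 : ℕ) < k) := fun h =>
          not_isUnit_zero (by rwa [(hW i0 h).2] at hp)
        have hkk0 : kk ≠ i0 := by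
          rintro rfl
          exact hc1 (by rw [omg_eps]; exact hp.neg)
        have hvb : IsUnit (omg v (eps i0 : (Fin g ⊕ Fin g) → R)) := by
          rw [omg_eps]; exact hp.neg
        have h1 : IsUnit (omg v ((eps i0 + phv kk) : (Fin g ⊕ Fin g) → R)) := by
          rw [omg_add_right]
          exact isUnit_add_of_nonunit hvb hc2
        have h2 : IsUnit (omg ((eps i0 + phv kk) : (Fin g ⊕ Fin g) → R) (eps kk)) := by
          rw [omg_eps, Pi.add_apply, eps_apply_inr, phv_apply_inr, if_pos rfl, zero_add]
          exact isUnit_one.neg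
        obtain ⟨t, htcl, hact, hfix⟩ := move_two h1 h2
        refine ⟨t, htcl, hact, fun i hi => ?_⟩
        have hik : i ≠ kk := by rintro rfl; omega
        have hii0 : i ≠ i0 := by rintro rfl; omega
        constructor <;>
          [exact hfix _ (by simp [omg_eps_left, omg_phv_left, Pi.sub_apply, Pi.add_apply,
              eps_apply_inl, eps_apply_inr, phv_apply_inl, phv_apply_inr,
              (hW i hi).1, (hW i hi).2, hik, hii0])
            (by simp [omg_eps_left, omg_phv_left, Pi.sub_apply, Pi.add_apply,
              eps_apply_inl, eps_apply_inr, phv_apply_inl, phv_apply_inr,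
              (hW i hi).1, (hW i hi).2, hik, hii0]);
           exact hfix _ (by simp [omg_eps_left, omg_phv_left, Pi.sub_apply, Pi.add_apply,
              eps_apply_inl, eps_apply_inr, phv_apply_inl, phv_apply_inr,
              (hW i hi).1, (hW i hi).2, hik, hii0])
            (by simp [omg_eps_left, omg_phv_left, Pi.sub_apply, Pi.add_apply,
              eps_apply_inl, eps_apply_inr, phv_apply_inl, phv_apply_inr,
              (hW i hi).1, (hW i hi).2, hik, hii0])]

lemma M2 {k : ℕ} (kk : Fin g) (hkk : (kk : ℕ) = k) {w : (Fin g ⊕ Fin g) → R}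
    (hW : inW k w) (h1 : omg (eps kk : (Fin g ⊕ Fin g) → R) w = 1) :
    ∃ t : GL (Fin g ⊕ Fin g) R, t ∈ TCl g R ∧
      (t : Matrix (Fin g ⊕ Fin g) (Fin g ⊕ Fin g) R) *ᵥ w = phv kk ∧
      (t : Matrix (Fin g ⊕ Fin g) (Fin g ⊕ Fin g) R) *ᵥ (eps kk) = eps kk ∧
      ∀ i : Fin g, (i : ℕ) < k →
        (t : Matrix (Fin g ⊕ Fin g) (Fin g ⊕ Fin g) R) *ᵥ (eps i) = eps i ∧
        (t : Matrix (Fin g ⊕ Fin g) (Fin g ⊕ Fin g) R) *ᵥ (phv i) = phv i := by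
  have hwr : w (Sum.inr kk) = 1 := by rwa [omg_eps_left] at h1
  by_cases hc1 : IsUnit (omg w (phv kk : (Fin g ⊕ Fin g) → R))
  · obtain ⟨t, htcl, hact, hfix⟩ := move_one hc1
    refine ⟨t, htcl, hact, ?_, fun i hi => ?_⟩
    · exact hfix _ (by simp [omg_eps_left, Pi.sub_apply, phv_apply_inr, hwr])
    · have hik : i ≠ kk := by rintro rfl; omega
      constructor <;>
        [exact hfix _ (by simp [omg_eps_left, omg_phv_left, Pi.sub_apply, eps_apply_inl,
            eps_apply_inr, phv_apply_inl, phv_apply_inr, (hW i hi).1, (hW i hi).2, hik]);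
         exact hfix _ (by simp [omg_eps_left, omg_phv_left, Pi.sub_apply, eps_apply_inl,
            eps_apply_inr, phv_apply_inl, phv_apply_inr, (hW i hi).1, (hW i hi).2, hik])]
  · have hwe : omg w ((eps kk : (Fin g ⊕ Fin g) → R)) = -1 := by
      rw [omg_eps, hwr]
    have h1' : IsUnit (omg w ((eps kk + phv kk) : (Fin g ⊕ Fin g) → R)) := by
      rw [omg_add_right, hwe]
      exact isUnit_add_of_nonunit isUnit_one.neg hc1
    have h2' : IsUnit (omg ((eps kk + phv kk) : (Fin g ⊕ Fin g) → R) (phv kk)) := by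
      rw [omg_phv, Pi.add_apply, eps_apply_inl, phv_apply_inl, if_pos rfl, add_zero]
      exact isUnit_one
    obtain ⟨t, htcl, hact, hfix⟩ := move_two h1' h2'
    refine ⟨t, htcl, hact, ?_, fun i hi => ?_⟩
    · exact hfix _ (by simp [omg_eps_left, Pi.sub_apply, Pi.add_apply, eps_apply_inr,
          phv_apply_inr, hwr])
        (by simp [omg_eps_left, Pi.sub_apply, Pi.add_apply, eps_apply_inr, phv_apply_inr])
    · have hik : i ≠ kk := by rintro rfl; omega
      constructor <;>
        [exact hfix _ (by simp [omg_eps_left, omg_phv_left, Pi.sub_apply, Pi.add_apply,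
            eps_apply_inl, eps_apply_inr, phv_apply_inl, phv_apply_inr,
            (hW i hi).1, (hW i hi).2, hik])
          (by simp [omg_eps_left, omg_phv_left, Pi.sub_apply, Pi.add_apply,
            eps_apply_inl, eps_apply_inr, phv_apply_inl, phv_apply_inr,
            (hW i hi).1, (hW i hi).2, hik]);
         exact hfix _ (by simp [omg_eps_left, omg_phv_left, Pi.sub_apply, Pi.add_apply,
            eps_apply_inl, eps_apply_inr, phv_apply_inl, phv_apply_inr,
            (hW i hi).1, (hW i hi).2, hik])
          (by simp [omg_eps_left, omg_phv_left, Pi.sub_apply, Pi.add_apply,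
            eps_apply_inl, eps_apply_inr, phv_apply_inl, phv_apply_inr,
            (hW i hi).1, (hW i hi).2, hik])]

end Elim
section ElimMain

variable {g : ℕ} {R : Type*} [CommRing R]

lemma mulVec_dotProduct' (A : Matrix (Fin g ⊕ Fin g) (Fin g ⊕ Fin g) R)
    (x w : (Fin g ⊕ Fin g) → R) : (A *ᵥ x) ⬝ᵥ w = x ⬝ᵥ (Aᵀ *ᵥ w) := by
  rw [dotProduct_comm, Matrix.dotProduct_mulVec, vecMul_eq_transpose_mulVec,
    dotProduct_comm]

lemma omg_sp {a : GL (Fin g ⊕ Fin g) R} (ha : a ∈ Sp g R) (x y : (Fin g ⊕ Fin g) → R) :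
    omg ((a : Matrix (Fin g ⊕ Fin g) (Fin g ⊕ Fin g) R) *ᵥ x)
      ((a : Matrix (Fin g ⊕ Fin g) (Fin g ⊕ Fin g) R) *ᵥ y) = omg x y := by
  have ha' : (a : Matrix (Fin g ⊕ Fin g) (Fin g ⊕ Fin g) R)ᵀ * sJ g R * a = sJ g R := ha
  rw [omg, Matrix.mulVec_mulVec, mulVec_dotProduct', Matrix.mulVec_mulVec, ← mul_assoc,
    ha', omg]

lemma fix_all_eq_one {A : GL (Fin g ⊕ Fin g) R}
    (h : ∀ i : Fin g,
      (A : Matrix (Fin g ⊕ Fin g) (Fin g ⊕ Fin g) R) *ᵥ (eps i) = eps i ∧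
      (A : Matrix (Fin g ⊕ Fin g) (Fin g ⊕ Fin g) R) *ᵥ (phv i) = phv i) : A = 1 := by
  ext p q
  cases q with
  | inl j =>
    have hc := congrFun (h j).1 p
    rw [eps, Matrix.mulVec_single] at hc
    simpa [Matrix.one_apply, Pi.single_apply, mul_one] using hc
  | inr j =>
    have hc := congrFun (h j).2 p
    rw [phv, Matrix.mulVec_single] at hc
    simpa [Matrix.one_apply, Pi.single_apply, mul_one] using hc

variable [IsLocalRing R]

lemma sp_le_TCl_aux : ∀ d k, k + d = g → ∀ A : GL (Fin g ⊕ Fin g) R, A ∈ Sp g R →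
    (∀ i : Fin g, (i : ℕ) < k →
      (A : Matrix (Fin g ⊕ Fin g) (Fin g ⊕ Fin g) R) *ᵥ (eps i) = eps i ∧
      (A : Matrix (Fin g ⊕ Fin g) (Fin g ⊕ Fin g) R) *ᵥ (phv i) = phv i) →
    A ∈ TCl g R := by
  intro d
  induction d with
  | zero =>
    intro k hk A _ hfix
    have hA1 : A = 1 := fix_all_eq_one (fun i => hfix i (by omega))
    rw [hA1]; exact one_mem _
  | succ d ih =>
    intro k hk A hA hfix
    have hklt : k < g := by omega
    set kk : Fin g := ⟨k, hklt⟩ with hkkdef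
    have hkk : (kk : ℕ) = k := rfl
    set v : (Fin g ⊕ Fin g) → R :=
      (A : Matrix (Fin g ⊕ Fin g) (Fin g ⊕ Fin g) R) *ᵥ (eps kk) with hvdef
    have hWv : inW k v := by
      intro i hi
      have hik : i ≠ kk := by rintro rfl; omega
      constructor
      · have : v (Sum.inl i) = omg v (phv i) := by rw [omg_phv]
        rw [this, hvdef, ← (hfix i hi).2, omg_sp hA, omg_phv, eps_apply_inl, if_neg hik]
      · have : v (Sum.inr i) = - omg v (eps i) := by rw [omg_eps, neg_neg]
        rw [this, hvdef, ← (hfix i hi).1, omg_sp hA, omg_eps, eps_apply_inr]; simp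
    have hu : ∃ p, IsUnit (v p) := by
      apply exists_isUnit_left_of_omg
        (w := (A : Matrix (Fin g ⊕ Fin g) (Fin g ⊕ Fin g) R) *ᵥ (phv kk))
      rw [hvdef, omg_sp hA, omg_phv, eps_apply_inl, if_pos rfl]
      exact isUnit_one
    obtain ⟨t1, ht1, hact1, hfix1⟩ := M1 kk hkk hWv hu
    set A1 : GL (Fin g ⊕ Fin g) R := t1 * A with hA1def
    have hA1 : A1 ∈ Sp g R := mul_mem (TCl_le_Sp ht1) hA
    have hA1mv : ∀ x, (A1 : Matrix (Fin g ⊕ Fin g) (Fin g ⊕ Fin g) R) *ᵥ x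
        = (t1 : Matrix (Fin g ⊕ Fin g) (Fin g ⊕ Fin g) R) *ᵥ
          ((A : Matrix (Fin g ⊕ Fin g) (Fin g ⊕ Fin g) R) *ᵥ x) := by
      intro x; rw [hA1def, Units.val_mul, ← Matrix.mulVec_mulVec]
    have hfixA1 : ∀ i : Fin g, (i : ℕ) < k →
        (A1 : Matrix (Fin g ⊕ Fin g) (Fin g ⊕ Fin g) R) *ᵥ (eps i) = eps i ∧
        (A1 : Matrix (Fin g ⊕ Fin g) (Fin g ⊕ Fin g) R) *ᵥ (phv i) = phv i := by
      intro i hi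
      constructor
      · rw [hA1mv, (hfix i hi).1, (hfix1 i hi).1]
      · rw [hA1mv, (hfix i hi).2, (hfix1 i hi).2]
    have hA1eps : (A1 : Matrix (Fin g ⊕ Fin g) (Fin g ⊕ Fin g) R) *ᵥ (eps kk) = eps kk := by
      rw [hA1mv, ← hvdef, hact1]
    set w : (Fin g ⊕ Fin g) → R :=
      (A1 : Matrix (Fin g ⊕ Fin g) (Fin g ⊕ Fin g) R) *ᵥ (phv kk) with hwdef
    have hWw : inW k w := by
      intro i hi
      have hik : i ≠ kk := by rintro rfl; omega
      constructor
      · have : w (Sum.inl i) = omg w (phv i) := by rw [omg_phv]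
        rw [this, hwdef, ← (hfixA1 i hi).2, omg_sp hA1, omg_phv, phv_apply_inl]
      · have : w (Sum.inr i) = - omg w (eps i) := by rw [omg_eps, neg_neg]
        rw [this, hwdef, ← (hfixA1 i hi).1, omg_sp hA1, omg_eps, phv_apply_inr, if_neg hik]
        simp
    have h1 : omg (eps kk : (Fin g ⊕ Fin g) → R) w = 1 := by
      rw [← hA1eps, hwdef, omg_sp hA1, omg_phv, eps_apply_inl, if_pos rfl]
    obtain ⟨t2, ht2, hact2, hfixeps2, hfix2⟩ := M2 kk hkk hWw h1
    set A2 : GL (Fin g ⊕ Fin g) R := t2 * A1 with hA2def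
    have hA2 : A2 ∈ Sp g R := mul_mem (TCl_le_Sp ht2) hA1
    have hA2mv : ∀ x, (A2 : Matrix (Fin g ⊕ Fin g) (Fin g ⊕ Fin g) R) *ᵥ x
        = (t2 : Matrix (Fin g ⊕ Fin g) (Fin g ⊕ Fin g) R) *ᵥ
          ((A1 : Matrix (Fin g ⊕ Fin g) (Fin g ⊕ Fin g) R) *ᵥ x) := by
      intro x; rw [hA2def, Units.val_mul, ← Matrix.mulVec_mulVec]
    have hfixA2 : ∀ i : Fin g, (i : ℕ) < k + 1 →
        (A2 : Matrix (Fin g ⊕ Fin g) (Fin g ⊕ Fin g) R) *ᵥ (eps i) = eps i ∧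
        (A2 : Matrix (Fin g ⊕ Fin g) (Fin g ⊕ Fin g) R) *ᵥ (phv i) = phv i := by
      intro i hi
      by_cases hik : (i : ℕ) < k
      · constructor
        · rw [hA2mv, (hfixA1 i hik).1, (hfix2 i hik).1]
        · rw [hA2mv, (hfixA1 i hik).2, (hfix2 i hik).2]
      · have hieq : i = kk := by
          apply Fin.ext; omega
        subst hieq
        constructor
        · rw [hA2mv, hA1eps, hfixeps2]
        · rw [hA2mv, ← hwdef, hact2]
    have hA2cl : A2 ∈ TCl g R := ih (k + 1) (by omega) A2 hA2 hfixA2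
    have : A = t1⁻¹ * (t2⁻¹ * A2) := by
      rw [hA2def, hA1def]
      group
    rw [this]
    exact mul_mem (inv_mem ht1) (mul_mem (inv_mem ht2) hA2cl)

lemma sp_le_TCl : Sp g R ≤ TCl g R := by
  intro A hA
  exact sp_le_TCl_aux g 0 (by omega) A hA (fun i hi => absurd hi (by omega))

end ElimMain
section Comm

variable {g : ℕ} {R : Type*} [CommRing R]

@[simp] lemma sJ_inl_inl (i j : Fin g) : (sJ g R) (Sum.inl i) (Sum.inl j) = 0 := rfl
@[simp] lemma sJ_inr_inr (i j : Fin g) : (sJ g R) (Sum.inr i) (Sum.inr j) = 0 := rfl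
lemma sJ_inl_inr (i j : Fin g) : (sJ g R) (Sum.inl i) (Sum.inr j) = if i = j then 1 else 0 := by
  simp [sJ, Matrix.one_apply]
lemma sJ_inr_inl (i j : Fin g) : (sJ g R) (Sum.inr i) (Sum.inl j) = -(if i = j then 1 else 0) := by
  simp [sJ, Matrix.one_apply]

/-- diagonal torus vector -/
def dvec (u : Rˣ) (i0 : Fin g) : (Fin g ⊕ Fin g) → R :=
  Sum.elim (fun i => if i = i0 then (u : R) else 1)
    (fun i => if i = i0 then ((u⁻¹ : Rˣ) : R) else 1)

/-- diagonal torus element of the symplectic group -/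
def dUnit (u : Rˣ) (i0 : Fin g) : GL (Fin g ⊕ Fin g) R where
  val := Matrix.diagonal (dvec u i0)
  inv := Matrix.diagonal (dvec u⁻¹ i0)
  val_inv := by
    rw [Matrix.diagonal_mul_diagonal]
    ext p q
    rw [Matrix.diagonal_apply, Matrix.one_apply]
    by_cases hpq : p = q
    · subst hpq
      simp only [if_pos rfl]
      cases p <;> simp [dvec] <;> split <;> simp
    · simp [hpq]
  inv_val := by
    rw [Matrix.diagonal_mul_diagonal]
    ext p q
    rw [Matrix.diagonal_apply, Matrix.one_apply]
    by_cases hpq : p = q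
    · subst hpq
      simp only [if_pos rfl]
      cases p <;> simp [dvec] <;> split <;> simp
    · simp [hpq]

lemma dUnit_mem_Sp (u : Rˣ) (i0 : Fin g) : dUnit u i0 ∈ Sp g R := by
  show ((Matrix.diagonal (dvec u i0))ᵀ) * sJ g R * Matrix.diagonal (dvec u i0) = sJ g R
  rw [Matrix.diagonal_transpose]
  ext p q
  rw [Matrix.mul_diagonal, Matrix.diagonal_mul]
  rcases p with i | i <;> rcases q with j | j
  · simp
  · rcases eq_or_ne i j with rfl | hij
    · rw [sJ_inl_inr, if_pos rfl, mul_one]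
      show dvec u i0 (Sum.inl i) * dvec u i0 (Sum.inr i) = 1
      unfold dvec
      rw [Sum.elim_inl, Sum.elim_inr]
      split_ifs <;> simp
    · rw [sJ_inl_inr, if_neg hij]
      ring
  · rcases eq_or_ne i j with rfl | hij
    · rw [sJ_inr_inl, if_pos rfl]
      show (dvec u i0 (Sum.inr i) * -1) * dvec u i0 (Sum.inl i) = -1
      unfold dvec
      rw [Sum.elim_inl, Sum.elim_inr]
      split_ifs <;> simp
    · rw [sJ_inr_inl, if_neg hij]
      ring
  · simp

lemma dUnit_eps (u : Rˣ) (i0 : Fin g) :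
    ((dUnit u i0 : GL (Fin g ⊕ Fin g) R) : Matrix (Fin g ⊕ Fin g) (Fin g ⊕ Fin g) R) *ᵥ
      (eps i0) = (u : R) • eps i0 := by
  show Matrix.diagonal (dvec u i0) *ᵥ (eps i0) = (u : R) • eps i0
  funext p
  rw [eps, Matrix.mulVec_single]
  cases p <;> simp [Matrix.diagonal_apply, Pi.single_apply, dvec, eps] <;> split <;>
    simp_all [dvec]

end Comm
section CommReal

variable {g : ℕ} {R : Type*} [CommRing R] [IsLocalRing R]

lemma TGen_is_commutator (hg : 0 < g) (h2 : IsUnit (2 : R)) (h3 : IsUnit (3 : R))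
    {t : GL (Fin g ⊕ Fin g) R} (ht : t ∈ TGen g R) :
    ∃ a b : GL (Fin g ⊕ Fin g) R, a ∈ Sp g R ∧ b ∈ Sp g R ∧ t = a * b * a⁻¹ * b⁻¹ := by
  obtain ⟨v, c, hv, rfl⟩ := ht
  set i0 : Fin g := ⟨0, hg⟩
  obtain ⟨t1, ht1, hact1, -⟩ :=
    M1 (k := 0) i0 rfl (v := v) (fun i hi => absurd hi (by omega)) hv
  have ht1Sp : t1 ∈ Sp g R := TCl_le_Sp ht1
  have hhSp : t1⁻¹ ∈ Sp g R := inv_mem ht1Sp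
  have hhv : ((t1⁻¹ : GL (Fin g ⊕ Fin g) R) : Matrix (Fin g ⊕ Fin g) (Fin g ⊕ Fin g) R) *ᵥ
      (eps i0) = v := by
    have hone : ((t1⁻¹ : GL (Fin g ⊕ Fin g) R) : Matrix (Fin g ⊕ Fin g) (Fin g ⊕ Fin g) R) *
        (t1 : Matrix (Fin g ⊕ Fin g) (Fin g ⊕ Fin g) R) = 1 := by
      rw [← Units.val_mul, inv_mul_cancel, Units.val_one]
    rw [← hact1, Matrix.mulVec_mulVec, hone, Matrix.one_mulVec]
  obtain ⟨u2, hu2⟩ := id h2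
  obtain ⟨u3, hu3⟩ := id h3
  set cc : R := ((u3⁻¹ : Rˣ) : R) * c with hccdef
  have hdSp : dUnit u2 i0 ∈ Sp g R := dUnit_mem_Sp u2 i0
  have hTSp : Tunit (eps i0 : (Fin g ⊕ Fin g) → R) cc ∈ Sp g R := Tunit_mem_Sp _ _
  have e1 : dUnit u2 i0 * Tunit (eps i0) cc * (dUnit u2 i0)⁻¹ * (Tunit (eps i0) cc)⁻¹
      = Tunit (eps i0) c := by
    rw [sp_conj_Tunit hdSp, dUnit_eps, Tunit_smul_vec, Tunit_inv, Tunit_mul]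
    congr 1
    have h9 : (3 : R) * ((u3⁻¹ : Rˣ) : R) = 1 := by
      rw [← hu3, ← Units.val_mul, mul_inv_cancel, Units.val_one]
    have h8 : ((u2 : R) * (u2 : R)) * cc + -cc = (3 * ((u3⁻¹ : Rˣ) : R)) * c := by
      rw [hccdef, hu2]; ring
    rw [h8, h9, one_mul]
  refine ⟨t1⁻¹ * dUnit u2 i0 * t1, t1⁻¹ * Tunit (eps i0) cc * t1,
    mul_mem (mul_mem hhSp hdSp) ht1Sp, mul_mem (mul_mem hhSp hTSp) ht1Sp, ?_⟩
  have e2 : (t1⁻¹ * dUnit u2 i0 * t1) * (t1⁻¹ * Tunit (eps i0) cc * t1) *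
      (t1⁻¹ * dUnit u2 i0 * t1)⁻¹ * (t1⁻¹ * Tunit (eps i0) cc * t1)⁻¹
      = t1⁻¹ * (dUnit u2 i0 * Tunit (eps i0) cc * (dUnit u2 i0)⁻¹ * (Tunit (eps i0) cc)⁻¹) *
        (t1⁻¹)⁻¹ := by
    group
  rw [e2, e1, sp_conj_Tunit hhSp, hhv]

lemma sp_le_of_commutators (hg : 0 < g) (h2 : IsUnit (2 : R)) (h3 : IsUnit (3 : R))
    (K : Subgroup (GL (Fin g ⊕ Fin g) R))
    (hK : ∀ a b : GL (Fin g ⊕ Fin g) R, a ∈ Sp g R → b ∈ Sp g R → a * b * a⁻¹ * b⁻¹ ∈ K) :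
    Sp g R ≤ K := by
  intro s hs
  have hsub : TGen g R ⊆ K := by
    intro t ht
    obtain ⟨a, b, ha, hb, rfl⟩ := TGen_is_commutator hg h2 h3 ht
    exact hK a b ha hb
  exact (Subgroup.closure_le K).mpr hsub (sp_le_TCl hs)

end CommReal
section Mult

variable {g : ℕ} {R : Type*} [CommRing R]

/-- the similitude relation -/
def SRel (a : GL (Fin g ⊕ Fin g) R) (u : Rˣ) : Prop :=
  (a : Matrix (Fin g ⊕ Fin g) (Fin g ⊕ Fin g) R)ᵀ * sJ g R * a = (u : R) • sJ g R

lemma srel_unique (hg : 0 < g) {a : GL (Fin g ⊕ Fin g) R} {u v : Rˣ}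
    (h1 : SRel a u) (h2 : SRel a v) : u = v := by
  have h := h1.symm.trans h2
  have he := congrFun (congrFun h (Sum.inl ⟨0, hg⟩)) (Sum.inr ⟨0, hg⟩)
  simp [Matrix.smul_apply, sJ_inl_inr] at he
  exact Units.ext he

lemma srel_one : SRel (1 : GL (Fin g ⊕ Fin g) R) 1 := symp_one

lemma mem_Sp_iff {a : GL (Fin g ⊕ Fin g) R} : a ∈ Sp g R ↔ SRel a 1 := by
  constructor
  · intro h
    show _ = _
    rw [Units.val_one, one_smul]
    exact h
  · intro h
    have : (a : Matrix (Fin g ⊕ Fin g) (Fin g ⊕ Fin g) R)ᵀ * sJ g R * a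
        = ((1 : Rˣ) : R) • sJ g R := h
    rw [Units.val_one, one_smul] at this
    exact this

lemma multiplier_eq (hg : 0 < g) {a : GL (Fin g ⊕ Fin g) R} {u : Rˣ} (h : SRel a u) :
    multiplier a = u := by
  have hex : ∃ w : Rˣ,
      (a : Matrix (Fin g ⊕ Fin g) (Fin g ⊕ Fin g) R)ᵀ * sJ g R * a = (w : R) • sJ g R := ⟨u, h⟩
  rw [multiplier, dif_pos hex]
  exact srel_unique hg hex.choose_spec h

lemma mem_DeltaN {n : ℕ} {p : (_ : Fin n) → GL (Fin g ⊕ Fin g) R} :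
    p ∈ DeltaN g R n ↔ ∃ u : Rˣ, ∀ i, SRel (p i) u := Iff.rfl

lemma mem_Delta {p : GL (Fin g ⊕ Fin g) R × GL (Fin g ⊕ Fin g) R} :
    p ∈ Delta g R ↔ ∃ u : Rˣ, SRel p.1 u ∧ SRel p.2 u := Iff.rfl

lemma iota_srel (u : Rˣ) : SRel (iota g R u) u := by
  show (iotaM g R (u : R))ᵀ * sJ g R * iotaM g R (u : R) = (u : R) • sJ g R
  simp [iotaM, sJ, Matrix.fromBlocks_transpose, Matrix.fromBlocks_multiply,
    Matrix.fromBlocks_smul, Matrix.smul_mul, Matrix.mul_smul]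

lemma srel_mul {a b : GL (Fin g ⊕ Fin g) R} {u v : Rˣ} (ha : SRel a u) (hb : SRel b v) :
    SRel (a * b) (u * v) := symp_mul ha hb

lemma srel_inv {a : GL (Fin g ⊕ Fin g) R} {u : Rˣ} (ha : SRel a u) : SRel a⁻¹ u⁻¹ :=
  symp_inv ha

/-- coordinate insertion -/
def eIns {n : ℕ} (i : Fin n) (x : GL (Fin g ⊕ Fin g) R) : (_ : Fin n) → GL (Fin g ⊕ Fin g) R :=
  fun j => if j = i then x else 1

end Mult

section Fprod

/-- ordered product over `Fin n` in a (possibly noncommutative) monoid -/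
def fprod {n : ℕ} {M : Type*} [Monoid M] (f : Fin n → M) : M :=
  ((List.finRange n).map f).prod

lemma map_fprod {n : ℕ} {M N : Type*} [Monoid M] [Monoid N] (φ : M →* N) (f : Fin n → M) :
    φ (fprod f) = fprod (fun k => φ (f k)) := by
  rw [fprod, map_list_prod, List.map_map, fprod]
  rfl

lemma fprod_apply {n : ℕ} {ι : Type*} {M : ι → Type*} [∀ i, Monoid (M i)]
    (f : Fin n → (∀ i, M i)) (j : ι) : (fprod f) j = fprod (fun k => f k j) :=
  map_fprod (Pi.evalMonoidHom M j) f

lemma fprod_mem {n : ℕ} {M : Type*} [Monoid M] {B : Type*} [SetLike B M] [SubmonoidClass B M]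
    {S : B} {f : Fin n → M} (h : ∀ k, f k ∈ S) : fprod f ∈ S :=
  list_prod_mem (by
    intro x hx
    obtain ⟨k, _, rfl⟩ := List.mem_map.mp hx
    exact h k)

lemma list_prod_single_aux {M : Type*} [Monoid M] {ι : Type*} (j : ι) (f : ι → M)
    (hf : ∀ k, k ≠ j → f k = 1) :
    ∀ l : List ι, l.Nodup → j ∈ l → (l.map f).prod = f j := by
  intro l
  induction l with
  | nil => simp
  | cons h tl ih =>
    intro hnd hmem
    rcases eq_or_ne h j with rfl | hne
    · have hone : ∀ x ∈ tl.map f, x = 1 := by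
        intro x hx
        obtain ⟨k, hk, rfl⟩ := List.mem_map.mp hx
        exact hf k (fun he => (List.nodup_cons.mp hnd).1 (he ▸ hk))
      rw [List.map_cons, List.prod_cons, List.prod_eq_one hone, mul_one]
    · have hmem' : j ∈ tl := by
        rcases List.mem_cons.mp hmem with h1 | h1
        · exact absurd h1.symm hne
        · exact h1
      rw [List.map_cons, List.prod_cons, hf h hne, one_mul]
      exact ih (List.nodup_cons.mp hnd).2 hmem'

lemma fprod_single {n : ℕ} {M : Type*} [Monoid M] (f : Fin n → M) (j : Fin n)
    (hf : ∀ k, k ≠ j → f k = 1) : fprod f = f j :=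
  list_prod_single_aux j f hf _ (List.nodup_finRange n) (List.mem_finRange j)

lemma commute_fprod {n : ℕ} {M : Type*} [Monoid M] (a : M) (f : Fin n → M)
    (h : ∀ k, Commute a (f k)) : Commute a (fprod f) :=
  Commute.list_prod_right _ _ (by
    intro x hx
    obtain ⟨k, _, rfl⟩ := List.mem_map.mp hx
    exact h k)

end Fprod

section Mult2

variable {g : ℕ} {R : Type*} [CommRing R]

lemma fprod_eIns {n : ℕ} (y : (_ : Fin n) → GL (Fin g ⊕ Fin g) R) :
    fprod (fun k => eIns k (y k)) = y := by
  funext j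
  rw [fprod_apply]
  have : (fun k => eIns (g := g) (R := R) k (y k) j) = fun k => if j = k then y k else 1 := by
    funext k; rfl
  rw [this, fprod_single (fun k => if j = k then y k else 1) j (fun k hk => if_neg (Ne.symm hk)),
    if_pos rfl]

end Mult2
section MasterSec

/-- drop the 0-th coordinate -/
def dropHom {G : Type*} [Monoid G] (n : ℕ) : ((_ : Fin (n+1)) → G) →* ((_ : Fin n) → G) where
  toFun p := fun k => p k.succ
  map_one' := rfl
  map_mul' _ _ := rfl

/-- insert at the 0-th coordinate -/
def consHom {G : Type*} [Monoid G] (n : ℕ) : G →* ((_ : Fin (n+1)) → G) where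
  toFun x := Fin.cons x 1
  map_one' := by
    funext j
    refine Fin.cases ?_ (fun k => ?_) j <;> simp
  map_mul' a b := by
    funext j
    refine Fin.cases ?_ (fun k => ?_) j <;> simp

variable {g : ℕ} {R : Type*} [CommRing R] [IsLocalRing R]

open scoped commutatorElement in
theorem master (hg : 0 < g) (h2 : IsUnit (2 : R)) (h3 : IsUnit (3 : R)) :
    ∀ n, 2 ≤ n → ∀ G : Subgroup ((_ : Fin n) → GL (Fin g ⊕ Fin g) R),
      G ≤ DeltaN g R n →
      (∀ i j : Fin n, i ≠ j → ∀ a b : GL (Fin g ⊕ Fin g) R, ∀ u : Rˣ,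
        SRel a u → SRel b u → ∃ p ∈ G, p i = a ∧ p j = b) →
      ∀ s : GL (Fin g ⊕ Fin g) R, s ∈ Sp g R → ∀ i : Fin n, eIns i s ∈ G := by
  intro n hn
  induction n, hn using Nat.le_induction with
  | base =>
    intro G hG hpair s hs i
    have hj : ∃ j : Fin 2, i ≠ j := by
      refine ⟨⟨1 - i.val, by omega⟩, fun he => ?_⟩
      have h' := congrArg Fin.val he
      simp only [] at h'
      omega
    obtain ⟨j, hij⟩ := hj
    obtain ⟨p, hp, hpi, hpj⟩ := hpair i j hij s 1 1 (mem_Sp_iff.mp hs) srel_one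
    have hpe : p = eIns i s := by
      funext x
      rcases eq_or_ne x i with rfl | hx
      · rw [hpi, eIns, if_pos rfl]
      · have hvx : x = j := by
          have h1 : x.val ≠ i.val := fun h => hx (Fin.ext h)
          have h2 : i.val ≠ j.val := fun h => hij (Fin.ext h)
          apply Fin.ext
          omega
        rw [hvx, hpj, eIns, if_neg (Ne.symm hij)]
    rw [← hpe]
    exact hp
  | succ n hn ih =>
    intro G₀ hG₀ hpair₀ s₀ hs₀ i₀
    have key : ∀ G : Subgroup ((_ : Fin (n+1)) → GL (Fin g ⊕ Fin g) R),
        G ≤ DeltaN g R (n+1) →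
        (∀ i j : Fin (n+1), i ≠ j → ∀ a b : GL (Fin g ⊕ Fin g) R, ∀ u : Rˣ,
          SRel a u → SRel b u → ∃ p ∈ G, p i = a ∧ p j = b) →
        ∀ s : GL (Fin g ⊕ Fin g) R, s ∈ Sp g R → eIns (0 : Fin (n+1)) s ∈ G := by
      intro G hG hpair s hs
      set π : ((_ : Fin (n+1)) → GL (Fin g ⊕ Fin g) R) →* ((_ : Fin n) → GL (Fin g ⊕ Fin g) R) :=
        dropHom n with hπdef
      have hGm : G.map π ≤ DeltaN g R n := by
        rintro y ⟨p, hp, rfl⟩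
        obtain ⟨u, hu⟩ := hG hp
        exact ⟨u, fun k => hu k.succ⟩
      have hpairm : ∀ i j : Fin n, i ≠ j → ∀ a b : GL (Fin g ⊕ Fin g) R, ∀ u : Rˣ,
          SRel a u → SRel b u → ∃ p ∈ G.map π, p i = a ∧ p j = b := by
        intro i j hij a b u ha hb
        obtain ⟨p, hp, hp1, hp2⟩ := hpair i.succ j.succ
          (fun h => hij (Fin.succ_injective n h)) a b u ha hb
        exact ⟨π p, ⟨p, hp, rfl⟩, hp1, hp2⟩
      have hIH := ih (G.map π) hGm hpairm
      set K : Subgroup (GL (Fin g ⊕ Fin g) R) := G.comap (consHom n) with hKdef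
      have hKiff : ∀ x : GL (Fin g ⊕ Fin g) R,
          x ∈ K ↔ (Fin.cons x 1 : (_ : Fin (n+1)) → GL (Fin g ⊕ Fin g) R) ∈ G :=
        fun x => Iff.rfl
      have hK1 : ∀ x ∈ K, SRel x 1 := by
        intro x hx
        obtain ⟨u, hu⟩ := hG ((hKiff x).mp hx)
        have hx0 : SRel x u := by
          have h0 := hu 0
          rwa [show (Fin.cons x 1 : (_ : Fin (n+1)) → GL (Fin g ⊕ Fin g) R) 0 = x from
            Fin.cons_zero _ _] at h0
        have hx1 : SRel (1 : GL (Fin g ⊕ Fin g) R) u := by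
          have h1 := hu (Fin.succ ⟨0, by omega⟩)
          rwa [show (Fin.cons x 1 : (_ : Fin (n+1)) → GL (Fin g ⊕ Fin g) R)
            (Fin.succ ⟨0, by omega⟩) = 1 from Fin.cons_succ _ _ _] at h1
        have hu1 : u = 1 := srel_unique hg hx1 srel_one
        rwa [hu1] at hx0
      have h0ne : ∀ j : Fin n, (0 : Fin (n+1)) ≠ j.succ := fun j => (Fin.succ_ne_zero j).symm
      have hconj : ∀ s' x : GL (Fin g ⊕ Fin g) R, SRel s' 1 → x ∈ K →
          s' * x * s'⁻¹ ∈ K := by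
        intro s' x hs' hx
        obtain ⟨p, hp, hp0, -⟩ := hpair 0 (Fin.succ ⟨0, by omega⟩) (h0ne _) s' 1 1 hs' srel_one
        have he : p * (Fin.cons x 1 : (_ : Fin (n+1)) → GL (Fin g ⊕ Fin g) R) * p⁻¹
            = (Fin.cons (s' * x * s'⁻¹) 1 : (_ : Fin (n+1)) → GL (Fin g ⊕ Fin g) R) := by
          funext j
          refine Fin.cases ?_ (fun k => ?_) j
          · simp [Pi.mul_apply, Pi.inv_apply, hp0]
          · simp [Pi.mul_apply, Pi.inv_apply]
        rw [hKiff]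
        rw [← he]
        exact mul_mem (mul_mem hp ((hKiff x).mp hx)) (inv_mem hp)
      haveI hnormal : (K.subgroupOf (Sp g R)).Normal := by
        constructor
        intro x hx gg
        rw [Subgroup.mem_subgroupOf] at hx ⊢
        have := hconj ↑gg ↑x (mem_Sp_iff.mp gg.2) hx
        simpa using this
      set qm := QuotientGroup.mk' (K.subgroupOf (Sp g R)) with hqmdef
      have lemA : ∀ (a b : ↥(Sp g R)) (y y' : (_ : Fin n) → GL (Fin g ⊕ Fin g) R),
          (∃ p ∈ G, π p = y ∧ p 0 = ↑a) → (∃ q ∈ G, π q = y' ∧ q 0 = ↑b) →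
          (∀ k, y k * y' k = y' k * y k) → Commute (qm a) (qm b) := by
        rintro a b y y' ⟨p, hp, hpy, hp0⟩ ⟨q, hq, hqy, hq0⟩ hcomm
        have hcm : p * q * p⁻¹ * q⁻¹
            = (Fin.cons ((a : GL (Fin g ⊕ Fin g) R) * (b : GL (Fin g ⊕ Fin g) R) *
                ((a : GL (Fin g ⊕ Fin g) R))⁻¹ * ((b : GL (Fin g ⊕ Fin g) R))⁻¹) 1 :
                (_ : Fin (n+1)) → GL (Fin g ⊕ Fin g) R) := by
          funext j
          refine Fin.cases ?_ (fun k => ?_) j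
          · simp [Pi.mul_apply, Pi.inv_apply, hp0, hq0]
          · have h1 : p k.succ = y k := congrFun hpy k
            have h2 : q k.succ = y' k := congrFun hqy k
            simp only [Pi.mul_apply, Pi.inv_apply, Fin.cons_succ, h1, h2, Pi.one_apply]
            rw [hcomm k]
            group
        have hKm : (a : GL (Fin g ⊕ Fin g) R) * (b : GL (Fin g ⊕ Fin g) R) *
            ((a : GL (Fin g ⊕ Fin g) R))⁻¹ * ((b : GL (Fin g ⊕ Fin g) R))⁻¹ ∈ K := by
          rw [hKiff, ← hcm]
          exact mul_mem (mul_mem (mul_mem hp hq) (inv_mem hp)) (inv_mem hq)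
        have hsub : ⁅a, b⁆ ∈ K.subgroupOf (Sp g R) := by
          rw [Subgroup.mem_subgroupOf, commutatorElement_def]
          simpa using hKm
        have h1 : qm ⁅a, b⁆ = 1 := (QuotientGroup.eq_one_iff _).mpr hsub
        rw [map_commutatorElement] at h1
        exact commutatorElement_eq_one_iff_commute.mp h1
      have lemB : ∀ (a : ↥(Sp g R)) (j : Fin n),
          ∃ y : (_ : Fin n) → GL (Fin g ⊕ Fin g) R,
            (∃ p ∈ G, π p = y ∧ p 0 = ↑a) ∧ y j = 1 ∧ ∀ k, SRel (y k) 1 := by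
        intro a j
        obtain ⟨p, hp, hp0, hpj⟩ := hpair 0 j.succ (h0ne j) ↑a 1 1 (mem_Sp_iff.mp a.2) srel_one
        have hyj : (π p) j = 1 := hpj
        obtain ⟨u, hu⟩ := hG hp
        have hu1 : u = 1 := by
          have h' := hu j.succ
          rw [hpj] at h'
          exact srel_unique hg h' srel_one
        refine ⟨π p, ⟨p, hp, rfl, hp0⟩, hyj, fun k => ?_⟩
        have h' := hu k.succ
        rwa [hu1] at h'
      have lemC : ∀ (y : (_ : Fin n) → GL (Fin g ⊕ Fin g) R), (∀ k, SRel (y k) 1) →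
          ∀ (a : ↥(Sp g R)), (∃ p ∈ G, π p = y ∧ p 0 = ↑a) →
          ∃ b : Fin n → ↥(Sp g R),
            (∀ k, ∃ p ∈ G, π p = eIns k (y k) ∧ p 0 = ↑(b k)) ∧
            qm a = fprod (fun k => qm (b k)) := by
        intro y hy a ha
        obtain ⟨p, hp, hpy, hp0⟩ := ha
        have hex : ∀ k : Fin n, ∃ r, r ∈ G ∧ π r = eIns k (y k) := by
          intro k
          obtain ⟨r, hr, hre⟩ := hIH (y k) (mem_Sp_iff.mpr (hy k)) k
          exact ⟨r, hr, hre⟩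
        choose r hrG hre using hex
        have hr0Sp : ∀ k, SRel (r k 0) 1 := by
          intro k
          obtain ⟨u, hu⟩ := hG (hrG k)
          have hk : SRel (y k) u := by
            have h' : r k k.succ = y k := by
              have h'' := congrFun (hre k) k
              simp [eIns] at h''
              exact h''
            have h3 := hu k.succ
            rwa [h'] at h3
          have hu1 : u = 1 := srel_unique hg hk (hy k)
          have h3 := hu 0
          rwa [hu1] at h3
        set b : Fin n → ↥(Sp g R) := fun k => ⟨r k 0, mem_Sp_iff.mpr (hr0Sp k)⟩ with hbdef
        refine ⟨b, fun k => ⟨r k, hrG k, hre k, rfl⟩, ?_⟩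
        have hprodG : fprod r ∈ G := fprod_mem (fun k => hrG k)
        have hπprod : π (fprod r) = y := by
          rw [map_fprod]
          have h' : (fun k => π (r k)) = fun k => eIns k (y k) := funext fun k => hre k
          rw [h', fprod_eIns]
        have hdiffe : p * (fprod r)⁻¹
            = (Fin.cons (↑a * ((fprod r) 0)⁻¹) 1 :
                (_ : Fin (n+1)) → GL (Fin g ⊕ Fin g) R) := by
          funext j
          refine Fin.cases ?_ (fun k => ?_) j
          · simp [Pi.mul_apply, Pi.inv_apply, hp0]
          · have h1 : p k.succ = y k := congrFun hpy k
            have h2 : (fprod r) k.succ = y k := congrFun hπprod k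
            simp only [Pi.mul_apply, Pi.inv_apply, Fin.cons_succ, h1, h2]
            exact mul_inv_cancel _
        have hK0 : ↑a * ((fprod r) 0)⁻¹ ∈ K := by
          rw [hKiff, ← hdiffe]
          exact mul_mem hp (inv_mem hprodG)
        have hcoe : (fprod r) 0 = ((fprod b : ↥(Sp g R)) : GL (Fin g ⊕ Fin g) R) := by
          rw [fprod_apply]
          have h' : ((fprod b : ↥(Sp g R)) : GL (Fin g ⊕ Fin g) R)
              = fprod (fun k => ((b k : ↥(Sp g R)) : GL (Fin g ⊕ Fin g) R)) :=
            map_fprod ((Sp g R).subtype) b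
          rw [h']
        have hqeq : qm a = qm (fprod b) := by
          have hsub : a * (fprod b)⁻¹ ∈ K.subgroupOf (Sp g R) := by
            rw [Subgroup.mem_subgroupOf]
            have h' : ((a * (fprod b)⁻¹ : ↥(Sp g R)) : GL (Fin g ⊕ Fin g) R)
                = ↑a * (((fprod b : ↥(Sp g R)) : GL (Fin g ⊕ Fin g) R))⁻¹ := by
              simp
            rw [h', ← hcoe]
            exact hK0
          have h1 : qm (a * (fprod b)⁻¹) = 1 := (QuotientGroup.eq_one_iff _).mpr hsub
          rw [_root_.map_mul, _root_.map_inv] at h1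
          exact mul_inv_eq_one.mp h1
        rw [hqeq, map_fprod]
      have lemD : ∀ (k : Fin n) (sk : GL (Fin g ⊕ Fin g) R), SRel sk 1 →
          ∀ (bb : ↥(Sp g R)), (∃ p ∈ G, π p = eIns k sk ∧ p 0 = ↑bb) →
          ∀ t : ↥(Sp g R), Commute (qm bb) (qm t) := by
        intro k sk hsk bb hbb t
        obtain ⟨y', hy'lift, hy'k, hy'Sp⟩ := lemB t k
        obtain ⟨b', hb'lift, hqt⟩ := lemC y' hy'Sp t hy'lift
        rw [hqt]
        apply commute_fprod
        intro k'
        rcases eq_or_ne k' k with rfl | hk'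
        · obtain ⟨q, hqG, hqe, hq0⟩ := hb'lift k'
          have h1 : eIns k' (y' k') = (1 : (_ : Fin n) → GL (Fin g ⊕ Fin g) R) := by
            funext j
            simp [eIns, hy'k]
          rw [h1] at hqe
          have hq1 : q = (Fin.cons (q 0) 1 : (_ : Fin (n+1)) → GL (Fin g ⊕ Fin g) R) := by
            funext j
            refine Fin.cases ?_ (fun kk => ?_) j
            · rw [Fin.cons_zero]
            · have h3 := congrFun hqe kk
              rw [Fin.cons_succ]
              exact h3
          have hbK : ↑(b' k') ∈ K := by
            rw [← hq0, hKiff, ← hq1]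
            exact hqG
          have hq1' : qm (b' k') = 1 := (QuotientGroup.eq_one_iff _).mpr
            (by rw [Subgroup.mem_subgroupOf]; exact hbK)
          rw [hq1']
          exact Commute.one_right _
        · obtain ⟨q, hqG, hqe, hq0⟩ := hb'lift k'
          refine lemA bb (b' k') (eIns k sk) (eIns k' (y' k')) hbb ⟨q, hqG, hqe, hq0⟩ ?_
          intro j
          show (if j = k then sk else 1) * (if j = k' then y' k' else 1)
            = (if j = k' then y' k' else 1) * (if j = k then sk else 1)
          by_cases hd1 : j = k
          · subst hd1
            simp [Ne.symm hk']
          · simp [hd1]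
      have lemE : ∀ t t' : ↥(Sp g R), Commute (qm t) (qm t') := by
        intro t t'
        obtain ⟨y, hylift, -, hySp⟩ := lemB t ⟨0, by omega⟩
        obtain ⟨b, hblift, hqt⟩ := lemC y hySp t hylift
        rw [hqt]
        refine (commute_fprod (qm t') (fun k => qm (b k)) ?_).symm
        intro k
        exact (lemD k (y k) (hySp k) (b k) (hblift k) t').symm
      have hcommK : ∀ x y : GL (Fin g ⊕ Fin g) R, x ∈ Sp g R → y ∈ Sp g R →
          x * y * x⁻¹ * y⁻¹ ∈ K := by
        intro x y hx hy
        have hc := lemE ⟨x, hx⟩ ⟨y, hy⟩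
        have h1 : qm (⁅(⟨x, hx⟩ : ↥(Sp g R)), (⟨y, hy⟩ : ↥(Sp g R))⁆) = 1 := by
          rw [map_commutatorElement]
          exact commutatorElement_eq_one_iff_commute.mpr hc
        have h2 := (QuotientGroup.eq_one_iff _).mp h1
        rw [Subgroup.mem_subgroupOf] at h2
        have h4 : ((⁅(⟨x, hx⟩ : ↥(Sp g R)), (⟨y, hy⟩ : ↥(Sp g R))⁆ : ↥(Sp g R)) :
            GL (Fin g ⊕ Fin g) R) = x * y * x⁻¹ * y⁻¹ := by
          rw [commutatorElement_def]
          rfl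
        rwa [h4] at h2
      have hsK : s ∈ K := sp_le_of_commutators hg h2 h3 K hcommK hs
      have heq : eIns (0 : Fin (n+1)) s
          = (Fin.cons s 1 : (_ : Fin (n+1)) → GL (Fin g ⊕ Fin g) R) := by
        funext j
        refine Fin.cases ?_ (fun k => ?_) j
        · simp [eIns]
        · simp [eIns, Fin.succ_ne_zero k]
      rw [heq]
      exact (hKiff s).mp hsK
    -- now transport to an arbitrary coordinate via a swap
    set σ := Equiv.swap (0 : Fin (n+1)) i₀ with hσdef
    set ψ : ((_ : Fin (n+1)) → GL (Fin g ⊕ Fin g) R) →* ((_ : Fin (n+1)) → GL (Fin g ⊕ Fin g) R) :=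
      { toFun := fun p => p ∘ σ,
        map_one' := rfl,
        map_mul' := fun _ _ => rfl } with hψdef
    set G2 : Subgroup ((_ : Fin (n+1)) → GL (Fin g ⊕ Fin g) R) := G₀.comap ψ with hG2def
    have hG2 : G2 ≤ DeltaN g R (n+1) := by
      intro p hp
      obtain ⟨u, hu⟩ := hG₀ hp
      refine ⟨u, fun j => ?_⟩
      have h' := hu (σ j)
      simpa [hψdef, hσdef, Function.comp, Equiv.swap_apply_self] using h'
    have hpair2 : ∀ i j : Fin (n+1), i ≠ j → ∀ a b : GL (Fin g ⊕ Fin g) R, ∀ u : Rˣ,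
        SRel a u → SRel b u → ∃ p ∈ G2, p i = a ∧ p j = b := by
      intro i j hij a b u ha hb
      obtain ⟨p, hp, h1, h2⟩ := hpair₀ (σ i) (σ j) (fun h => hij (σ.injective h)) a b u ha hb
      refine ⟨p ∘ σ, ?_, h1, h2⟩
      show ψ (p ∘ σ) ∈ G₀
      have h' : (p ∘ σ) ∘ σ = p := funext fun j' => congrArg p (Equiv.swap_apply_self _ _ j')
      show (p ∘ σ) ∘ σ ∈ G₀
      rw [h']
      exact hp
    have hkey := key G2 hG2 hpair2 s₀ hs₀
    have heq2 : (eIns (0 : Fin (n+1)) s₀) ∘ σ = eIns i₀ s₀ := by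
      funext j
      show (if σ j = 0 then s₀ else 1) = if j = i₀ then s₀ else 1
      rcases eq_or_ne j i₀ with rfl | hj
      · rw [if_pos rfl, if_pos (Equiv.swap_apply_right _ _)]
      · rw [if_neg hj, if_neg]
        intro h
        apply hj
        have h' := congrArg σ h
        rwa [Equiv.swap_apply_self, Equiv.swap_apply_left] at h'
    have : (eIns (0 : Fin (n+1)) s₀) ∘ σ ∈ G₀ := hkey
    rwa [heq2] at this

end MasterSec
section Final

lemma padic_isUnit_ofNat (ℓ : ℕ) [Fact (Nat.Prime ℓ)] (m : ℕ) (hm : ¬ ((ℓ : ℤ) ∣ (m : ℤ))) :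
    IsUnit ((m : ℤ_[ℓ])) := by
  by_contra h
  have hlt : ‖((m : ℤ) : ℤ_[ℓ])‖ < 1 := by
    have := PadicInt.not_isUnit_iff.mp h
    simpa using this
  exact hm ((PadicInt.norm_int_lt_one_iff_dvd (m : ℤ)).mp hlt)

/-- reduction of fullness in `Δ_{2g,n}(Z_ℓ)` to pairs. -/
theorem statement10 (g n ℓ : ℕ) (hg : 1 ≤ g) (hn : 2 ≤ n) [Fact (Nat.Prime ℓ)] (hℓ5 : 5 ≤ ℓ)
    (G : Subgroup ((_ : Fin n) → GL (Fin g ⊕ Fin g) ℤ_[ℓ]))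
    (hG : G ≤ DeltaN g ℤ_[ℓ] n) (hGc : IsClosed (G : Set ((_ : Fin n) → GL (Fin g ⊕ Fin g) ℤ_[ℓ]))) :
    G = DeltaN g ℤ_[ℓ] n ↔
      ({u : ℤ_[ℓ]ˣ | ∃ p ∈ G, multiplier (p ⟨0, by omega⟩) = u} = Set.univ ∧
       ∀ i j : Fin n, i ≠ j →
         G.map ((Pi.evalMonoidHom (fun _ : Fin n => GL (Fin g ⊕ Fin g) ℤ_[ℓ]) i).prod
           (Pi.evalMonoidHom (fun _ : Fin n => GL (Fin g ⊕ Fin g) ℤ_[ℓ]) j)) = Delta g ℤ_[ℓ]) := by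
  have hg' : 0 < g := hg
  have hprime := (Fact.out : Nat.Prime ℓ)
  have h2 : IsUnit (2 : ℤ_[ℓ]) := by
    have := padic_isUnit_ofNat ℓ 2 (by
      intro hdvd
      have := Int.le_of_dvd (by norm_num) hdvd
      omega)
    simpa using this
  have h3 : IsUnit (3 : ℤ_[ℓ]) := by
    have := padic_isUnit_ofNat ℓ 3 (by
      intro hdvd
      have := Int.le_of_dvd (by norm_num) hdvd
      omega)
    simpa using this
  constructor
  · rintro rfl
    constructor
    · apply Set.eq_univ_of_forall
      intro u
      exact ⟨(fun _ => iota g ℤ_[ℓ] u), ⟨u, fun _ => iota_srel u⟩,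
        multiplier_eq hg' (iota_srel u)⟩
    · intro i j hij
      apply Subgroup.ext
      intro x
      constructor
      · rintro ⟨p, hp, rfl⟩
        obtain ⟨u, hu⟩ := hp
        exact ⟨u, hu i, hu j⟩
      · intro hx
        obtain ⟨u, h1, h2'⟩ := hx
        refine ⟨(fun k => if k = i then x.1 else if k = j then x.2 else iota g ℤ_[ℓ] u),
          ?_, ?_⟩
        · refine ⟨u, fun k => ?_⟩
          beta_reduce
          by_cases hk1 : k = i
          · rw [if_pos hk1]
            exact h1
          · rw [if_neg hk1]
            by_cases hk2 : k = j
            · rw [if_pos hk2]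
              exact h2'
            · rw [if_neg hk2]
              exact iota_srel u
        · show (_, _) = x
          simp only [Pi.evalMonoidHom_apply]
          beta_reduce
          simp [Ne.symm hij]
  · rintro ⟨hmult, hproj⟩
    refine le_antisymm hG ?_
    intro y hy
    obtain ⟨u, hu⟩ := hy
    have humem : u ∈ {u : ℤ_[ℓ]ˣ | ∃ p ∈ G, multiplier (p ⟨0, by omega⟩) = u} := by
      rw [hmult]
      exact Set.mem_univ u
    obtain ⟨p, hpG, hpm⟩ := humem
    obtain ⟨u', hu'2⟩ := hG hpG
    have huu : u' = u := by
      rw [← hpm]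
      exact (multiplier_eq hg' (hu'2 _)).symm
    have hup : ∀ i, SRel (p i) u := by
      intro i
      rw [← huu]
      exact hu'2 i
    have hpair : ∀ i j : Fin n, i ≠ j → ∀ a b : GL (Fin g ⊕ Fin g) ℤ_[ℓ], ∀ w : ℤ_[ℓ]ˣ,
        SRel a w → SRel b w → ∃ q ∈ G, q i = a ∧ q j = b := by
      intro i j hij a b w ha hb
      have hab : ((a, b) : GL (Fin g ⊕ Fin g) ℤ_[ℓ] × GL (Fin g ⊕ Fin g) ℤ_[ℓ])
          ∈ Delta g ℤ_[ℓ] := ⟨w, ha, hb⟩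
      rw [← hproj i j hij] at hab
      obtain ⟨q, hq, hqe⟩ := hab
      exact ⟨q, hq, congrArg Prod.fst hqe, congrArg Prod.snd hqe⟩
    have hmaster := master hg' h2 h3 n hn G hG hpair
    have hz : ∀ i, (y * p⁻¹) i ∈ Sp g ℤ_[ℓ] := by
      intro i
      apply mem_Sp_iff.mpr
      have hm := srel_mul (hu i) (srel_inv (hup i))
      rw [mul_inv_cancel] at hm
      exact hm
    have hdec : y = fprod (fun i => eIns i ((y * p⁻¹) i)) * p := by
      rw [fprod_eIns]
      group
    rw [hdec]
    exact mul_mem (fprod_mem (fun i => hmaster ((y * p⁻¹) i) (hz i) i)) hpG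

end Final

end Paper
end

section
/- Let ℓ ∈ {2, 3} and let G be a subgroup of Δ₂(F_ℓ) such that pr_i(G) = GL₂(F_ℓ) for each i ∈ {1,2}. Then G = Δ₂(F_ℓ) if and only if there exists an element (g₁, g₂) ∈ G with (dim₁ g₁, dim₁ g₂) ∈ {(0,1), (1,0), (1,2), (2,1)} when ℓ = 2, respectively (dim₁ g₁, dim₁ g₂) ∈ {(1,2), (2,1)} when ℓ = 3. -/
open Matrix

namespace Paper

/-- The fiber product `Δ₂(F_ℓ) = GL₂ ×_det GL₂` over the determinant (for `g = 1` the
multiplier of `GSp₂ = GL₂` is the determinant). -/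
def Delta2 (ℓ : ℕ) : Subgroup (GL (Fin 2) (ZMod ℓ) × GL (Fin 2) (ZMod ℓ)) where
  carrier := {p | Matrix.det (p.1 : Matrix (Fin 2) (Fin 2) (ZMod ℓ))
    = Matrix.det (p.2 : Matrix (Fin 2) (Fin 2) (ZMod ℓ))}
  one_mem' := rfl
  mul_mem' := by
    intro a b ha hb
    show Matrix.det ((a.1 * b.1 : GL (Fin 2) (ZMod ℓ)) : Matrix (Fin 2) (Fin 2) (ZMod ℓ))
      = Matrix.det ((a.2 * b.2 : GL (Fin 2) (ZMod ℓ)) : Matrix (Fin 2) (Fin 2) (ZMod ℓ))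
    rw [Units.val_mul, Units.val_mul, Matrix.det_mul, Matrix.det_mul]
    rw [show Matrix.det (a.1 : Matrix (Fin 2) (Fin 2) (ZMod ℓ)) = _ from ha,
      show Matrix.det (b.1 : Matrix (Fin 2) (Fin 2) (ZMod ℓ)) = _ from hb]
  inv_mem' := by
    intro a ha
    show Matrix.det ((a.1⁻¹ : GL (Fin 2) (ZMod ℓ)) : Matrix (Fin 2) (Fin 2) (ZMod ℓ))
      = Matrix.det ((a.2⁻¹ : GL (Fin 2) (ZMod ℓ)) : Matrix (Fin 2) (Fin 2) (ZMod ℓ))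
    rw [Matrix.coe_units_inv, Matrix.coe_units_inv, Matrix.det_nonsing_inv,
      Matrix.det_nonsing_inv]
    rw [show Matrix.det (a.1 : Matrix (Fin 2) (Fin 2) (ZMod ℓ)) = _ from ha]

/-- `dim₁ x` is the `F_ℓ`-dimension of the kernel of `x - I`. -/
noncomputable def dim1 {ℓ : ℕ} (x : GL (Fin 2) (ZMod ℓ)) : ℕ :=
  Module.finrank (ZMod ℓ)
    (LinearMap.ker (Matrix.mulVecLin ((x : Matrix (Fin 2) (Fin 2) (ZMod ℓ)) - 1)))

/-! ### Auxiliary: membership in `Delta2` -/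

lemma mem_Delta2 {ℓ : ℕ} (p : GL (Fin 2) (ZMod ℓ) × GL (Fin 2) (ZMod ℓ)) :
    p ∈ Delta2 ℓ ↔ Matrix.det (p.1 : Matrix (Fin 2) (Fin 2) (ZMod ℓ))
      = Matrix.det (p.2 : Matrix (Fin 2) (Fin 2) (ZMod ℓ)) := Iff.rfl

lemma isUnit_det_coe {R : Type*} [CommRing R] (x : GL (Fin 2) R) :
    IsUnit ((x : Matrix (Fin 2) (Fin 2) R)).det :=
  (Matrix.isUnit_iff_isUnit_det _).mp x.isUnit

/-! ### Elementary matrices as elements of `GL₂` -/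

section units
variable {F : Type*} [CommRing F]

/-- upper elementary matrix as a unit -/
def eM (x : F) : GL (Fin 2) F :=
  ⟨!![1, x; 0, 1], !![1, -x; 0, 1],
    by ext i j; fin_cases i <;> fin_cases j <;> simp [Matrix.mul_apply, Fin.sum_univ_two],
    by ext i j; fin_cases i <;> fin_cases j <;> simp [Matrix.mul_apply, Fin.sum_univ_two]⟩

/-- lower elementary matrix as a unit -/
def lM (t : F) : GL (Fin 2) F :=
  ⟨!![1, 0; t, 1], !![1, 0; -t, 1],
    by ext i j; fin_cases i <;> fin_cases j <;> simp [Matrix.mul_apply, Fin.sum_univ_two],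
    by ext i j; fin_cases i <;> fin_cases j <;> simp [Matrix.mul_apply, Fin.sum_univ_two]⟩

@[simp] lemma eM_coe (x : F) :
    ((eM x : GL (Fin 2) F) : Matrix (Fin 2) (Fin 2) F) = !![1, x; 0, 1] := rfl
@[simp] lemma lM_coe (t : F) :
    ((lM t : GL (Fin 2) F) : Matrix (Fin 2) (Fin 2) F) = !![1, 0; t, 1] := rfl
end units

section gensec
variable {F : Type*} [Field F]

variable (H : Subgroup (GL (Fin 2) F))
  (hU : eM (1 : F) ∈ H)
  (hc : ∀ x ∈ H, ∀ a : GL (Fin 2) F, a * x * a⁻¹ ∈ H)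

include hU hc in
lemma eM_mem (x : F) : eM x ∈ H := by
  rcases eq_or_ne x 0 with rfl | hx
  · have : eM (0 : F) = 1 := by
      ext1
      simp [eM, Matrix.one_fin_two]
    rw [this]; exact H.one_mem
  · set d : GL (Fin 2) F :=
      ⟨!![x, 0; 0, 1], !![x⁻¹, 0; 0, 1],
        by ext i j; fin_cases i <;> fin_cases j <;>
          simp [Matrix.mul_apply, Fin.sum_univ_two, mul_inv_cancel₀ hx],
        by ext i j; fin_cases i <;> fin_cases j <;>
          simp [Matrix.mul_apply, Fin.sum_univ_two, inv_mul_cancel₀ hx]⟩ with hd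
    have key : eM x * d = d * eM 1 := by
      ext1
      show ((eM x : GL (Fin 2) F) : Matrix (Fin 2) (Fin 2) F) * _ = _
      simp [hd, eM]
    have : eM x = d * eM 1 * d⁻¹ := by
      rw [← key]; group
    rw [this]
    exact hc _ hU d

include hU hc in
lemma lM_mem (t : F) : lM t ∈ H := by
  set w : GL (Fin 2) F :=
    ⟨!![0, 1; 1, 0], !![0, 1; 1, 0],
      by ext i j; fin_cases i <;> fin_cases j <;> simp [Matrix.mul_apply, Fin.sum_univ_two],
      by ext i j; fin_cases i <;> fin_cases j <;> simp [Matrix.mul_apply, Fin.sum_univ_two]⟩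
    with hw
  have key : lM t * w = w * eM t := by
    ext1
    show ((lM t : GL (Fin 2) F) : Matrix (Fin 2) (Fin 2) F) * _ = _
    simp [hw, eM, lM]
  have : lM t = w * eM t * w⁻¹ := by rw [← key]; group
  rw [this]
  exact hc _ (eM_mem H hU hc t) w

include hU hc in
lemma gen_aux (s : GL (Fin 2) F) (hdet : ((s : Matrix (Fin 2) (Fin 2) F)).det = 1)
    (hc10 : (s : Matrix (Fin 2) (Fin 2) F) 1 0 ≠ 0) : s ∈ H := by
  set a := (s : Matrix (Fin 2) (Fin 2) F) 0 0
  set b := (s : Matrix (Fin 2) (Fin 2) F) 0 1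
  set c := (s : Matrix (Fin 2) (Fin 2) F) 1 0
  set d := (s : Matrix (Fin 2) (Fin 2) F) 1 1
  have hs : (s : Matrix (Fin 2) (Fin 2) F) = !![a, b; c, d] := Matrix.eta_fin_two _
  have hdet' : a * d - b * c = 1 := by rw [Matrix.det_fin_two] at hdet; exact hdet
  have key : eM ((a - 1) * c⁻¹) * lM c * eM ((d - 1) * c⁻¹) = s := by
    ext1
    show _ = (s : Matrix (Fin 2) (Fin 2) F)
    rw [Units.val_mul, Units.val_mul, eM_coe, lM_coe, eM_coe, hs]
    ext i j
    fin_cases i <;> fin_cases j <;>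
      simp [Matrix.mul_apply, Fin.sum_univ_two] <;> field_simp <;>
      first | ring1 | linear_combination hdet'
  rw [← key]
  exact H.mul_mem (H.mul_mem (eM_mem H hU hc _) (lM_mem H hU hc _)) (eM_mem H hU hc _)

include hU hc in
lemma gen (s : GL (Fin 2) F) (hdet : ((s : Matrix (Fin 2) (Fin 2) F)).det = 1) : s ∈ H := by
  by_cases hc10 : (s : Matrix (Fin 2) (Fin 2) F) 1 0 ≠ 0
  · exact gen_aux H hU hc s hdet hc10
  · push_neg at hc10
    set s' := lM (1 : F) * s with hs'
    have hdet' : ((s' : Matrix (Fin 2) (Fin 2) F)).det = 1 := by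
      rw [hs', Units.val_mul, Matrix.det_mul, lM_coe]
      simp [Matrix.det_fin_two, hdet]
    have h10 : (s' : Matrix (Fin 2) (Fin 2) F) 1 0 ≠ 0 := by
      have ha : (s : Matrix (Fin 2) (Fin 2) F) 0 0 ≠ 0 := by
        intro h
        rw [Matrix.det_fin_two, h, hc10] at hdet
        simp at hdet
      rw [hs', Units.val_mul, lM_coe]
      simpa [Matrix.mul_apply, Fin.sum_univ_two, hc10] using ha
    have hmem' : s' ∈ H := gen_aux H hU hc s' hdet' h10
    have : s = (lM (1 : F))⁻¹ * s' := by rw [hs']; group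
    rw [this]
    exact H.mul_mem (H.inv_mem (lM_mem H hU hc 1)) hmem'

end gensec

/-! ### `dim1` lemmas -/

section dim
variable {ℓ : ℕ} [Fact ℓ.Prime]

lemma dim1_le_two (x : GL (Fin 2) (ZMod ℓ)) : dim1 x ≤ 2 := by
  have h : dim1 x ≤ Module.finrank (ZMod ℓ) (Fin 2 → ZMod ℓ) := Submodule.finrank_le _
  simpa [Module.finrank_fin_fun] using h

lemma dim1_one : dim1 (1 : GL (Fin 2) (ZMod ℓ)) = 2 := by
  unfold dim1
  rw [show ((1 : GL (Fin 2) (ZMod ℓ)) : Matrix (Fin 2) (Fin 2) (ZMod ℓ)) - 1 = 0 by simp,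
    Matrix.mulVecLin_zero, LinearMap.ker_zero, finrank_top, Module.finrank_fin_fun]

lemma dim1_eq_two_iff (x : GL (Fin 2) (ZMod ℓ)) : dim1 x = 2 ↔ x = 1 := by
  constructor
  · intro h
    have htop : LinearMap.ker (Matrix.mulVecLin ((x : Matrix (Fin 2) (Fin 2) (ZMod ℓ)) - 1)) = ⊤ :=
      Submodule.eq_top_of_finrank_eq (by simpa [dim1, Module.finrank_fin_fun] using h)
    have hz : Matrix.mulVecLin ((x : Matrix (Fin 2) (Fin 2) (ZMod ℓ)) - 1) = 0 :=
      LinearMap.ker_eq_top.mp htop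
    have hM : ((x : Matrix (Fin 2) (Fin 2) (ZMod ℓ)) - 1) = 0 := by
      ext i j
      have h2 : ((x : Matrix (Fin 2) (Fin 2) (ZMod ℓ)) - 1).mulVec (Pi.single j 1) = 0 :=
        congrFun (congrArg (fun f => f.toFun) hz) (Pi.single j 1)
      have h3 := congrFun h2 i
      simpa [Matrix.mulVec_single] using h3
    ext : 1
    have : (x : Matrix (Fin 2) (Fin 2) (ZMod ℓ)) = 1 := by
      have := sub_eq_zero.mp hM; simpa using this
    simpa using this
  · rintro rfl; exact dim1_one

lemma dim1_pos_iff (x : GL (Fin 2) (ZMod ℓ)) :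
    0 < dim1 x ↔ ((x : Matrix (Fin 2) (Fin 2) (ZMod ℓ)) - 1).det = 0 := by
  rw [← Matrix.exists_mulVec_eq_zero_iff]
  unfold dim1
  rw [Module.finrank_pos_iff]
  rw [Submodule.nontrivial_iff_ne_bot, Submodule.ne_bot_iff]
  constructor
  · rintro ⟨v, hv, hv0⟩
    exact ⟨v, by simpa using hv0, by rwa [LinearMap.mem_ker, Matrix.mulVecLin_apply] at hv⟩
  · rintro ⟨v, hv0, hv⟩
    exact ⟨v, by rwa [LinearMap.mem_ker, Matrix.mulVecLin_apply], by simpa using hv0⟩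

lemma dim1_eq_one_iff (x : GL (Fin 2) (ZMod ℓ)) :
    dim1 x = 1 ↔ x ≠ 1 ∧ ((x : Matrix (Fin 2) (Fin 2) (ZMod ℓ)) - 1).det = 0 := by
  constructor
  · intro h
    refine ⟨fun hx => by simp [hx, dim1_one] at h, (dim1_pos_iff x).mp (by omega)⟩
  · rintro ⟨hne, hdet⟩
    have h1 := (dim1_pos_iff x).mpr hdet
    have h2 := dim1_le_two x
    have h3 : dim1 x ≠ 2 := fun h => hne ((dim1_eq_two_iff x).mp h)
    omega

lemma dim1_eq_zero (x : GL (Fin 2) (ZMod ℓ)) (h : dim1 x = 0) :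
    ((x : Matrix (Fin 2) (Fin 2) (ZMod ℓ)) - 1).det ≠ 0 := by
  intro hd
  have := (dim1_pos_iff x).mpr hd
  omega

end dim

/-! ### Finite checks -/

set_option maxRecDepth 40000 in
lemma conj2 : ∀ M : Matrix (Fin 2) (Fin 2) (ZMod 2), M.det = 1 → (M - 1).det = 0 → M ≠ 1 →
    ∃ A : Matrix (Fin 2) (Fin 2) (ZMod 2), A.det ≠ 0 ∧ M * A = A * !![1,1;0,1] := by decide

set_option maxRecDepth 40000 in
lemma conj3 : ∀ M : Matrix (Fin 2) (Fin 2) (ZMod 3), M.det = 1 → (M - 1).det = 0 → M ≠ 1 →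
    ∃ A : Matrix (Fin 2) (Fin 2) (ZMod 3), A.det ≠ 0 ∧ M * A = A * !![1,1;0,1] := by decide

set_option maxRecDepth 40000 in
lemma cube_a : ∀ M : Matrix (Fin 2) (Fin 2) (ZMod 2), M.det = 1 → (M - 1).det ≠ 0 →
    M * M * M = 1 := by decide

set_option maxRecDepth 40000 in
lemma cube_b : ∀ M : Matrix (Fin 2) (Fin 2) (ZMod 2), M.det = 1 → (M - 1).det = 0 →
    M * M * M = M := by decide

lemma zmod2_unit : ∀ d : ZMod 2, d ≠ 0 → d = 1 := by decide

/-! ### The main auxiliary lemma -/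

lemma aux_left {ℓ : ℕ} [Fact ℓ.Prime]
    (hconj : ∀ M : Matrix (Fin 2) (Fin 2) (ZMod ℓ), M.det = 1 → (M - 1).det = 0 → M ≠ 1 →
      ∃ A : Matrix (Fin 2) (Fin 2) (ZMod ℓ), A.det ≠ 0 ∧ M * A = A * !![1,1;0,1])
    (G : Subgroup (GL (Fin 2) (ZMod ℓ) × GL (Fin 2) (ZMod ℓ))) (hG : G ≤ Delta2 ℓ)
    (h1 : G.map (MonoidHom.fst _ _) = ⊤) (h2 : G.map (MonoidHom.snd _ _) = ⊤)
    (g : GL (Fin 2) (ZMod ℓ)) (hg : (g, (1 : GL (Fin 2) (ZMod ℓ))) ∈ G)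
    (hne : g ≠ 1) (hd0 : ((g : Matrix (Fin 2) (Fin 2) (ZMod ℓ)) - 1).det = 0) :
    G = Delta2 ℓ := by
  have hfst : ∀ a : GL (Fin 2) (ZMod ℓ), ∃ b, (a, b) ∈ G := by
    intro a
    have ha : a ∈ G.map (MonoidHom.fst _ _) := by rw [h1]; trivial
    rcases Subgroup.mem_map.mp ha with ⟨q, hq, hq1⟩
    exact ⟨q.2, by rwa [show (a, q.2) = q from Prod.ext hq1.symm rfl]⟩
  have hsnd : ∀ b : GL (Fin 2) (ZMod ℓ), ∃ a, (a, b) ∈ G := by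
    intro b
    have hb : b ∈ G.map (MonoidHom.snd _ _) := by rw [h2]; trivial
    rcases Subgroup.mem_map.mp hb with ⟨q, hq, hq2⟩
    exact ⟨q.1, by rwa [show (q.1, b) = q from Prod.ext rfl hq2.symm]⟩
  set H : Subgroup (GL (Fin 2) (ZMod ℓ)) := G.comap ((MonoidHom.id _).prod 1) with hH
  have hmemH : ∀ a : GL (Fin 2) (ZMod ℓ), a ∈ H ↔ (a, (1 : GL (Fin 2) (ZMod ℓ))) ∈ G := by
    intro a; rw [hH, Subgroup.mem_comap]; rfl
  have hcH : ∀ x ∈ H, ∀ a : GL (Fin 2) (ZMod ℓ), a * x * a⁻¹ ∈ H := by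
    intro x hx a
    rcases hfst a with ⟨b, hab⟩
    have hmul := G.mul_mem (G.mul_mem hab ((hmemH x).mp hx)) (G.inv_mem hab)
    have heq : (a, b) * (x, 1) * (a, b)⁻¹ = (a * x * a⁻¹, (1 : GL (Fin 2) (ZMod ℓ))) := by
      ext
      · simp
      · simp
    rw [hmemH]
    rwa [heq] at hmul
  have hdetg : ((g : Matrix (Fin 2) (Fin 2) (ZMod ℓ))).det = 1 := by
    have hd := (mem_Delta2 _).mp (hG hg)
    simpa using hd
  obtain ⟨A, hA0, hAc⟩ := hconj _ hdetg hd0 (fun h => hne (Units.ext h))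
  have hAu : IsUnit A := (Matrix.isUnit_iff_isUnit_det A).mpr (isUnit_iff_ne_zero.mpr hA0)
  have hga : g * hAu.unit = hAu.unit * eM 1 := by
    ext1
    rw [Units.val_mul, Units.val_mul, IsUnit.unit_spec, eM_coe]
    exact hAc
  have hUH : eM (1 : ZMod ℓ) ∈ H := by
    have h' := hcH g ((hmemH g).mpr hg) (hAu.unit)⁻¹
    rw [inv_inv] at h'
    have heq : (hAu.unit)⁻¹ * g * hAu.unit = eM 1 := by
      rw [mul_assoc, hga, ← mul_assoc]
      group
    rwa [heq] at h'
  have hgenL : ∀ s : GL (Fin 2) (ZMod ℓ), ((s : Matrix (Fin 2) (Fin 2) (ZMod ℓ))).det = 1 →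
      (s, (1 : GL (Fin 2) (ZMod ℓ))) ∈ G :=
    fun s hs => (hmemH s).mp (gen H hUH hcH s hs)
  have hgenR : ∀ s : GL (Fin 2) (ZMod ℓ), ((s : Matrix (Fin 2) (Fin 2) (ZMod ℓ))).det = 1 →
      ((1 : GL (Fin 2) (ZMod ℓ)), s) ∈ G := by
    intro s hs
    rcases hsnd s with ⟨a, has⟩
    have hdeta : ((a : Matrix (Fin 2) (Fin 2) (ZMod ℓ))).det = 1 := by
      have := (mem_Delta2 _).mp (hG has)
      simpa [hs] using this
    have hdetainv : (((a⁻¹ : GL (Fin 2) (ZMod ℓ)) : Matrix (Fin 2) (Fin 2) (ZMod ℓ))).det = 1 := by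
      rw [Matrix.coe_units_inv, Matrix.det_nonsing_inv, hdeta, Ring.inverse_one]
    have hmul := G.mul_mem (hgenL a⁻¹ hdetainv) has
    have heq : ((a⁻¹ : GL (Fin 2) (ZMod ℓ)), (1 : GL (Fin 2) (ZMod ℓ))) * (a, s) = (1, s) := by
      ext
      · simp
      · simp
    rwa [heq] at hmul
  refine le_antisymm hG ?_
  rintro ⟨x, y⟩ hxy
  have hxy' : ((x : Matrix (Fin 2) (Fin 2) (ZMod ℓ))).det
      = ((y : Matrix (Fin 2) (Fin 2) (ZMod ℓ))).det := (mem_Delta2 _).mp hxy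
  rcases hfst x with ⟨b, hxb⟩
  have hdb : ((b : Matrix (Fin 2) (Fin 2) (ZMod ℓ))).det
      = ((y : Matrix (Fin 2) (Fin 2) (ZMod ℓ))).det := by
    have := (mem_Delta2 _).mp (hG hxb)
    simpa [← hxy'] using this.symm
  have hyb : (((y * b⁻¹ : GL (Fin 2) (ZMod ℓ)) : Matrix (Fin 2) (Fin 2) (ZMod ℓ))).det = 1 := by
    rw [Units.val_mul, Matrix.det_mul, Matrix.coe_units_inv, Matrix.det_nonsing_inv, hdb]
    exact Ring.mul_inverse_cancel _ (isUnit_det_coe y)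
  have hmul := G.mul_mem (hgenR (y * b⁻¹) hyb) hxb
  have heq : ((1 : GL (Fin 2) (ZMod ℓ)), y * b⁻¹) * (x, b) = (x, y) := by
    ext
    · simp
    · simp [mul_assoc]
  rwa [heq] at hmul

end Paper

namespace Paper

lemma aux_right {ℓ : ℕ} [Fact ℓ.Prime]
    (hconj : ∀ M : Matrix (Fin 2) (Fin 2) (ZMod ℓ), M.det = 1 → (M - 1).det = 0 → M ≠ 1 →
      ∃ A : Matrix (Fin 2) (Fin 2) (ZMod ℓ), A.det ≠ 0 ∧ M * A = A * !![1,1;0,1])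
    (G : Subgroup (GL (Fin 2) (ZMod ℓ) × GL (Fin 2) (ZMod ℓ))) (hG : G ≤ Delta2 ℓ)
    (h1 : G.map (MonoidHom.fst _ _) = ⊤) (h2 : G.map (MonoidHom.snd _ _) = ⊤)
    (g : GL (Fin 2) (ZMod ℓ)) (hg : ((1 : GL (Fin 2) (ZMod ℓ)), g) ∈ G)
    (hne : g ≠ 1) (hd0 : ((g : Matrix (Fin 2) (Fin 2) (ZMod ℓ)) - 1).det = 0) :
    G = Delta2 ℓ := by
  set σ : (GL (Fin 2) (ZMod ℓ) × GL (Fin 2) (ZMod ℓ)) ≃*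
      (GL (Fin 2) (ZMod ℓ) × GL (Fin 2) (ZMod ℓ)) := MulEquiv.prodComm with hσ
  set G' := G.map σ.toMonoidHom with hG'def
  have hmem' : ∀ p : GL (Fin 2) (ZMod ℓ) × GL (Fin 2) (ZMod ℓ),
      p ∈ G' ↔ (p.2, p.1) ∈ G := by
    intro p
    rw [hG'def]
    constructor
    · rintro ⟨q, hq, rfl⟩; simpa [hσ] using hq
    · intro hp; exact ⟨(p.2, p.1), hp, rfl⟩
  have hG'le : G' ≤ Delta2 ℓ := by
    rintro ⟨x, y⟩ hxy
    have := (mem_Delta2 _).mp (hG ((hmem' (x, y)).mp hxy))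
    exact (mem_Delta2 _).mpr this.symm
  have h1' : G'.map (MonoidHom.fst _ _) = ⊤ := by
    rw [eq_top_iff]
    rintro a -
    rcases Subgroup.mem_map.mp (h2.symm ▸ Subgroup.mem_top a :
      a ∈ G.map (MonoidHom.snd _ _)) with ⟨q, hq, hq2⟩
    exact Subgroup.mem_map.mpr ⟨(q.2, q.1), (hmem' _).mpr (by simpa using hq), hq2⟩
  have h2' : G'.map (MonoidHom.snd _ _) = ⊤ := by
    rw [eq_top_iff]
    rintro a -
    rcases Subgroup.mem_map.mp (h1.symm ▸ Subgroup.mem_top a :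
      a ∈ G.map (MonoidHom.fst _ _)) with ⟨q, hq, hq1⟩
    exact Subgroup.mem_map.mpr ⟨(q.2, q.1), (hmem' _).mpr (by simpa using hq), hq1⟩
  have hgG' : (g, (1 : GL (Fin 2) (ZMod ℓ))) ∈ G' := (hmem' _).mpr hg
  have hfull : G' = Delta2 ℓ := aux_left hconj G' hG'le h1' h2' g hgG' hne hd0
  refine le_antisymm hG ?_
  rintro ⟨x, y⟩ hxy
  have : (y, x) ∈ Delta2 ℓ := (mem_Delta2 _).mpr ((mem_Delta2 _).mp hxy).symm
  rw [← hfull] at this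
  exact (hmem' (y, x)).mp this

end Paper

namespace Paper

lemma dim1_eM_one {ℓ : ℕ} [Fact ℓ.Prime] : dim1 (eM (1 : ZMod ℓ)) = 1 := by
  rw [dim1_eq_one_iff]
  constructor
  · intro h
    have h' : (!![1, 1; 0, 1] : Matrix (Fin 2) (Fin 2) (ZMod ℓ)) = 1 := by
      rw [← eM_coe (1 : ZMod ℓ), h, Units.val_one]
    have h01 := congrFun (congrFun h' 0) 1
    rw [Matrix.one_fin_two] at h01
    simp at h01
  · rw [eM_coe]
    norm_num [Matrix.det_fin_two, Matrix.one_fin_two]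

lemma det_eM_one {ℓ : ℕ} [Fact ℓ.Prime] :
    (((eM (1 : ZMod ℓ)) : Matrix (Fin 2) (Fin 2) (ZMod ℓ))).det = 1 := by
  rw [eM_coe]; norm_num [Matrix.det_fin_two]

lemma det_coe_one (x : GL (Fin 2) (ZMod 2)) :
    ((x : Matrix (Fin 2) (Fin 2) (ZMod 2))).det = 1 :=
  zmod2_unit _ (isUnit_det_coe x).ne_zero

/-- criterion for fullness mod `2` and `3` via fixed-space dimensions. -/
theorem statement12 (ℓ : ℕ) (hℓ : ℓ = 2 ∨ ℓ = 3)
    (G : Subgroup (GL (Fin 2) (ZMod ℓ) × GL (Fin 2) (ZMod ℓ))) (hG : G ≤ Delta2 ℓ)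
    (h1 : G.map (MonoidHom.fst _ _) = ⊤) (h2 : G.map (MonoidHom.snd _ _) = ⊤) :
    (ℓ = 2 → (G = Delta2 ℓ ↔
      ∃ p ∈ G, (dim1 p.1, dim1 p.2) ∈ ({(0,1), (1,0), (1,2), (2,1)} : Set (ℕ × ℕ)))) ∧
    (ℓ = 3 → (G = Delta2 ℓ ↔
      ∃ p ∈ G, (dim1 p.1, dim1 p.2) ∈ ({(1,2), (2,1)} : Set (ℕ × ℕ)))) := by
  rcases hℓ with rfl | rfl
  · haveI : Fact (Nat.Prime 2) := ⟨by norm_num⟩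
    refine ⟨fun _ => ?_, fun h => absurd h (by norm_num)⟩
    constructor
    · intro hGeq
      refine ⟨(eM 1, 1), ?_, ?_⟩
      · rw [hGeq]
        exact (mem_Delta2 _).mpr (by rw [det_eM_one]; simp)
      · show (dim1 (eM 1), dim1 (1 : GL (Fin 2) (ZMod 2))) ∈ _
        rw [dim1_eM_one, dim1_one]
        simp
    · rintro ⟨p, hp, hmem⟩
      simp only [Set.mem_insert_iff, Set.mem_singleton_iff, Prod.mk.injEq] at hmem
      have hdet1 : ((p.1 : Matrix (Fin 2) (Fin 2) (ZMod 2))).det = 1 := det_coe_one p.1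
      have hdet2 : ((p.2 : Matrix (Fin 2) (Fin 2) (ZMod 2))).det = 1 := det_coe_one p.2
      rcases hmem with ⟨ha, hb⟩ | ⟨ha, hb⟩ | ⟨ha, hb⟩ | ⟨ha, hb⟩
      · -- (0, 1) : use p^3 = (1, p.2)
        obtain ⟨hne2, hd2⟩ := (dim1_eq_one_iff p.2).mp hb
        have hnd1 := dim1_eq_zero p.1 ha
        have e1 : p.1 * p.1 * p.1 = 1 := Units.ext (by
          rw [Units.val_mul, Units.val_mul, Units.val_one]; exact cube_a _ hdet1 hnd1)
        have e2 : p.2 * p.2 * p.2 = p.2 := Units.ext (by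
          rw [Units.val_mul, Units.val_mul]; exact cube_b _ hdet2 hd2)
        have hq := G.mul_mem (G.mul_mem hp hp) hp
        have heq : p * p * p = ((1 : GL (Fin 2) (ZMod 2)), p.2) := Prod.ext e1 e2
        rw [heq] at hq
        exact aux_right conj2 G hG h1 h2 p.2 hq hne2 hd2
      · -- (1, 0) : use p^3 = (p.1, 1)
        obtain ⟨hne1, hd1⟩ := (dim1_eq_one_iff p.1).mp ha
        have hnd2 := dim1_eq_zero p.2 hb
        have e1 : p.1 * p.1 * p.1 = p.1 := Units.ext (by
          rw [Units.val_mul, Units.val_mul]; exact cube_b _ hdet1 hd1)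
        have e2 : p.2 * p.2 * p.2 = 1 := Units.ext (by
          rw [Units.val_mul, Units.val_mul, Units.val_one]; exact cube_a _ hdet2 hnd2)
        have hq := G.mul_mem (G.mul_mem hp hp) hp
        have heq : p * p * p = (p.1, (1 : GL (Fin 2) (ZMod 2))) := Prod.ext e1 e2
        rw [heq] at hq
        exact aux_left conj2 G hG h1 h2 p.1 hq hne1 hd1
      · -- (1, 2)
        obtain ⟨hne1, hd1⟩ := (dim1_eq_one_iff p.1).mp ha
        have p2eq : p.2 = 1 := (dim1_eq_two_iff p.2).mp hb
        have hp' : (p.1, (1 : GL (Fin 2) (ZMod 2))) ∈ G := by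
          rwa [show (p.1, (1 : GL (Fin 2) (ZMod 2))) = p from Prod.ext rfl p2eq.symm]
        exact aux_left conj2 G hG h1 h2 p.1 hp' hne1 hd1
      · -- (2, 1)
        obtain ⟨hne2, hd2⟩ := (dim1_eq_one_iff p.2).mp hb
        have p1eq : p.1 = 1 := (dim1_eq_two_iff p.1).mp ha
        have hp' : ((1 : GL (Fin 2) (ZMod 2)), p.2) ∈ G := by
          rwa [show ((1 : GL (Fin 2) (ZMod 2)), p.2) = p from Prod.ext p1eq.symm rfl]
        exact aux_right conj2 G hG h1 h2 p.2 hp' hne2 hd2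
  · haveI : Fact (Nat.Prime 3) := ⟨by norm_num⟩
    refine ⟨fun h => absurd h (by norm_num), fun _ => ?_⟩
    constructor
    · intro hGeq
      refine ⟨(eM 1, 1), ?_, ?_⟩
      · rw [hGeq]
        exact (mem_Delta2 _).mpr (by rw [det_eM_one]; simp)
      · show (dim1 (eM 1), dim1 (1 : GL (Fin 2) (ZMod 3))) ∈ _
        rw [dim1_eM_one, dim1_one]
        simp
    · rintro ⟨p, hp, hmem⟩
      simp only [Set.mem_insert_iff, Set.mem_singleton_iff, Prod.mk.injEq] at hmem
      rcases hmem with ⟨ha, hb⟩ | ⟨ha, hb⟩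
      · obtain ⟨hne1, hd1⟩ := (dim1_eq_one_iff p.1).mp ha
        have p2eq : p.2 = 1 := (dim1_eq_two_iff p.2).mp hb
        have hp' : (p.1, (1 : GL (Fin 2) (ZMod 3))) ∈ G := by
          rwa [show (p.1, (1 : GL (Fin 2) (ZMod 3))) = p from Prod.ext rfl p2eq.symm]
        exact aux_left conj3 G hG h1 h2 p.1 hp' hne1 hd1
      · obtain ⟨hne2, hd2⟩ := (dim1_eq_one_iff p.2).mp hb
        have p1eq : p.1 = 1 := (dim1_eq_two_iff p.1).mp ha
        have hp' : ((1 : GL (Fin 2) (ZMod 3)), p.2) ∈ G := by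
          rwa [show ((1 : GL (Fin 2) (ZMod 3)), p.2) = p from Prod.ext p1eq.symm rfl]
        exact aux_right conj3 G hG h1 h2 p.2 hp' hne2 hd2

end Paper
end
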